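/- arXiv:2204.07245 — 5 statements merged into one kernel-verified Lean document; each statement's English description precedes it below -/
import Mathlib

section
/- The function φ(t) = (1 − e^{−t})·t / (e^{−t} − 1 + t) is strictly decreasing on (0, +∞), with lim_{t→0+} φ(t) = 2 and lim_{t→+∞} φ(t) = 1. Consequently, for every t > 0 one has the strict inequalities e^{−t} − 1 + t < (1 − e^{−t})·t < 2·(e^{−t} − 1 + t). -/
open Real Filter Set Topology

private lemma Dpos {t : ℝ} (ht : 0 < t) : 0 < Real.exp (-t) - 1 + t := by
  nlinarith [Real.add_one_lt_exp (show (-t : ℝ) ≠ 0 by linarith)]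

private lemma key {t : ℝ} (ht : 0 < t) :
    t * Real.exp (-(t / 2)) < 1 - Real.exp (-t) := by
  have h := Real.self_lt_sinh_iff.mpr (show (0:ℝ) < t / 2 by linarith)
  rw [Real.sinh_eq] at h
  have hw : Real.exp (-(t / 2)) * Real.exp (t / 2) = 1 := by
    rw [← Real.exp_add]; norm_num
  have hw2 : Real.exp (-(t / 2)) * Real.exp (-(t / 2)) = Real.exp (-t) := by
    rw [← Real.exp_add]; ring_nf
  nlinarith [Real.exp_pos (-(t / 2))]

private lemma numneg {x : ℝ} (hx : 0 < x) :
    ((Real.exp (-x) * x + (1 - Real.exp (-x))) * (Real.exp (-x) - 1 + x)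
      - ((1 - Real.exp (-x)) * x) * (-Real.exp (-x) + 1)) < 0 := by
  have hk := key hx
  have hw2 : Real.exp (-(x / 2)) * Real.exp (-(x / 2)) = Real.exp (-x) := by
    rw [← Real.exp_add]; ring_nf
  have hwpos := Real.exp_pos (-(x / 2))
  have h1 : 0 < 1 - Real.exp (-x) := by nlinarith
  have h2 : (x * Real.exp (-(x / 2))) * (x * Real.exp (-(x / 2)))
      < (1 - Real.exp (-x)) * (1 - Real.exp (-x)) := by
    apply mul_lt_mul' hk.le hk _ h1
    positivity
  have h3 : x ^ 2 * Real.exp (-x) < (1 - Real.exp (-x)) * (1 - Real.exp (-x)) := by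
    calc x ^ 2 * Real.exp (-x) = (x * Real.exp (-(x / 2))) * (x * Real.exp (-(x / 2))) := by
          rw [← hw2]; ring
      _ < _ := h2
  nlinarith [h3]

private lemma phi_deriv {x : ℝ} (hx : 0 < x) :
    HasDerivAt (fun t : ℝ => ((1 - Real.exp (-t)) * t) / (Real.exp (-t) - 1 + t))
      (((Real.exp (-x) * x + (1 - Real.exp (-x))) * (Real.exp (-x) - 1 + x)
        - ((1 - Real.exp (-x)) * x) * (-Real.exp (-x) + 1)) / (Real.exp (-x) - 1 + x) ^ 2) x := by
  have he : HasDerivAt (fun t : ℝ => Real.exp (-t)) (-Real.exp (-x)) x := by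
    simpa [Function.comp_def] using (Real.hasDerivAt_exp (-x)).comp x (hasDerivAt_neg x)
  have hN : HasDerivAt (fun t : ℝ => (1 - Real.exp (-t)) * t)
      (Real.exp (-x) * x + (1 - Real.exp (-x))) x := by
    simpa [Pi.mul_def] using (he.const_sub 1).mul (hasDerivAt_id x)
  have hD : HasDerivAt (fun t : ℝ => Real.exp (-t) - 1 + t) (-Real.exp (-x) + 1) x := by
    simpa [Pi.add_def] using (he.sub_const 1).add (hasDerivAt_id x)
  exact hN.div hD (Dpos hx).ne'

/-- The function `φ(t) = (1 − e^{−t})·t / (e^{−t} − 1 + t)` is strictly decreasing on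
`(0, +∞)`, tends to `2` at `0+` and to `1` at `+∞`; consequently, for every `t > 0`,
`e^{−t} − 1 + t < (1 − e^{−t})·t < 2·(e^{−t} − 1 + t)`. -/
theorem stmt0 :
    StrictAntiOn (fun t : ℝ => ((1 - Real.exp (-t)) * t) / (Real.exp (-t) - 1 + t))
      (Set.Ioi 0) ∧
    Filter.Tendsto (fun t : ℝ => ((1 - Real.exp (-t)) * t) / (Real.exp (-t) - 1 + t))
      (nhdsWithin 0 (Set.Ioi 0)) (nhds 2) ∧
    Filter.Tendsto (fun t : ℝ => ((1 - Real.exp (-t)) * t) / (Real.exp (-t) - 1 + t))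
      Filter.atTop (nhds 1) ∧
    ∀ t : ℝ, 0 < t →
      Real.exp (-t) - 1 + t < (1 - Real.exp (-t)) * t ∧
      (1 - Real.exp (-t)) * t < 2 * (Real.exp (-t) - 1 + t) := by
  refine ⟨?_, ?_, ?_, ?_⟩
  · -- strict anti
    apply strictAntiOn_of_deriv_neg (convex_Ioi 0)
    · intro x hx
      exact (phi_deriv hx).continuousAt.continuousWithinAt
    · intro x hx
      rw [interior_Ioi] at hx
      rw [(phi_deriv hx).deriv]
      exact div_neg_of_neg_of_pos (numneg hx) (pow_pos (Dpos hx) 2)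
  · -- limit at 0+
    have he0 : Tendsto (fun t : ℝ => Real.exp (-t)) (𝓝 (0:ℝ)) (𝓝 1) := by
      have : Continuous (fun t : ℝ => Real.exp (-t)) := Real.continuous_exp.comp continuous_neg
      simpa using this.tendsto 0
    apply HasDerivAt.lhopital_zero_right_on_Ioo (f' := fun x : ℝ =>
        Real.exp (-x) * x + (1 - Real.exp (-x)))
      (g' := fun x : ℝ => -Real.exp (-x) + 1) (show (0:ℝ) < 1 by norm_num)
    · intro x hx
      have he : HasDerivAt (fun t : ℝ => Real.exp (-t)) (-Real.exp (-x)) x := by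
        simpa [Function.comp_def] using (Real.hasDerivAt_exp (-x)).comp x (hasDerivAt_neg x)
      simpa [Pi.mul_def] using (he.const_sub 1).mul (hasDerivAt_id x)
    · intro x hx
      have he : HasDerivAt (fun t : ℝ => Real.exp (-t)) (-Real.exp (-x)) x := by
        simpa [Function.comp_def] using (Real.hasDerivAt_exp (-x)).comp x (hasDerivAt_neg x)
      simpa [Pi.add_def] using (he.sub_const 1).add (hasDerivAt_id x)
    · intro x hx
      have : Real.exp (-x) < 1 := by
        rw [Real.exp_lt_one_iff]; linarith [hx.1]
      intro h; linarith
    · have : Continuous (fun t : ℝ => (1 - Real.exp (-t)) * t) := by continuity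
      have h := (this.tendsto 0).mono_left (nhdsWithin_le_nhds (s := Set.Ioi (0:ℝ)))
      simpa using h
    · have : Continuous (fun t : ℝ => Real.exp (-t) - 1 + t) := by continuity
      have h := (this.tendsto 0).mono_left (nhdsWithin_le_nhds (s := Set.Ioi (0:ℝ)))
      simpa using h
    · -- f'/g' → 2
      have hslope : Tendsto (fun y : ℝ => (Real.exp y - 1) / y) (𝓝[>] (0:ℝ)) (𝓝 1) := by
        have h := hasDerivAt_iff_tendsto_slope.mp (Real.hasDerivAt_exp 0)
        have h2 : Tendsto (slope Real.exp 0) (𝓝[>] (0:ℝ)) (𝓝 (Real.exp 0)) :=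
          h.mono_left (nhdsWithin_mono 0 (fun y hy => ne_of_gt hy))
      -- slope exp 0 y = (exp y - exp 0)/(y - 0)
        rw [Real.exp_zero] at h2
        refine h2.congr (fun y => ?_)
        simp [slope_def_field, Real.exp_zero]
      have hinv : Tendsto (fun y : ℝ => y / (Real.exp y - 1)) (𝓝[>] (0:ℝ)) (𝓝 1) := by
        have := (hslope.inv₀ (by norm_num)).congr (fun y => by rw [inv_div])
        simpa using this
      have hsum : Tendsto (fun y : ℝ => 1 + y / (Real.exp y - 1)) (𝓝[>] (0:ℝ)) (𝓝 2) := by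
        have := tendsto_const_nhds (α := ℝ) (x := (1:ℝ)) (f := 𝓝[>] (0:ℝ)) |>.add hinv
        norm_num at this
        exact this
      refine hsum.congr' ?_
      filter_upwards [self_mem_nhdsWithin] with y (hy : 0 < y)
      have hE : Real.exp (-y) = (Real.exp y)⁻¹ := Real.exp_neg y
      have h1 : Real.exp y - 1 ≠ 0 := by
        have := Real.add_one_lt_exp (ne_of_gt hy); intro h; linarith
      have h2 : Real.exp y ≠ 0 := (Real.exp_pos y).ne'
      have h1' : (-1 : ℝ) + Real.exp y ≠ 0 := by
        intro h; apply h1; linarith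
      rw [hE]
      field_simp [h1']
      ring
  · -- limit at +∞
    have he : Tendsto (fun t : ℝ => Real.exp (-t)) atTop (𝓝 0) :=
      Real.tendsto_exp_neg_atTop_nhds_zero
    have hnum : Tendsto (fun t : ℝ => 1 - Real.exp (-t)) atTop (𝓝 1) := by
      have := (tendsto_const_nhds (x := (1:ℝ)) (f := atTop)).sub he
      simpa using this
    have hden : Tendsto (fun t : ℝ => (Real.exp (-t) - 1) * t⁻¹ + 1) atTop (𝓝 1) := by
      have h1 : Tendsto (fun t : ℝ => Real.exp (-t) - 1) atTop (𝓝 (-1)) := by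
        have := he.sub (tendsto_const_nhds (x := (1:ℝ)) (f := atTop))
        simpa using this
      have h2 := h1.mul tendsto_inv_atTop_zero
      have h3 := h2.add (tendsto_const_nhds (x := (1:ℝ)) (f := atTop))
      norm_num at h3
      exact h3
    have := hnum.div hden (by norm_num)
    norm_num at this
    refine this.congr' ?_
    filter_upwards [eventually_gt_atTop (0:ℝ)] with t ht
    have hD := (Dpos ht).ne'
    have ht' := ht.ne'
    simp only [Pi.div_apply]
    field_simp
  · intro t ht
    constructor
    · have h := Real.add_one_lt_exp ht.ne'
      have h2 : Real.exp (-t) * Real.exp t = 1 := by rw [← Real.exp_add]; norm_num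
      nlinarith [Real.exp_pos (-t)]
    · -- second inequality via monotone auxiliary function
      have mono : StrictMonoOn (fun s : ℝ => (2 + s) * Real.exp (-s) + s - 2) (Set.Ici 0) := by
        apply strictMonoOn_of_deriv_pos (convex_Ici 0)
        · exact (by fun_prop : Continuous fun s : ℝ => (2 + s) * Real.exp (-s) + s - 2).continuousOn
        · intro x hx
          rw [interior_Ici] at hx
          have hx : (0:ℝ) < x := hx
          have he : HasDerivAt (fun s : ℝ => Real.exp (-s)) (-Real.exp (-x)) x := by
            simpa [Function.comp_def] using (Real.hasDerivAt_exp (-x)).comp x (hasDerivAt_neg x)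
          have hf : HasDerivAt (fun s : ℝ => (2 + s) * Real.exp (-s) + s - 2)
              (Real.exp (-x) + (2 + x) * -Real.exp (-x) + 1) x := by
            have := ((((hasDerivAt_const x (2:ℝ)).add (hasDerivAt_id x)).mul he).add
              (hasDerivAt_id x)).sub_const 2
            simpa using this
          rw [hf.deriv]
          have h := Real.add_one_lt_exp ht.ne'
          have h2 : Real.exp (-t) * Real.exp t = 1 := by rw [← Real.exp_add]; norm_num
          have h3 := Real.add_one_lt_exp hx.ne'
          have h4 : Real.exp (-x) * Real.exp x = 1 := by rw [← Real.exp_add]; norm_num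
          nlinarith [Real.exp_pos (-x), Real.exp_pos x]
      have h0 := mono (Set.self_mem_Ici) (show t ∈ Set.Ici (0:ℝ) from le_of_lt ht) ht
      norm_num at h0
      nlinarith [h0]
end

section
/- Let ρ be a Borel measure on (0, +∞) with 0 < ∫₀^∞ (v² ∧ v) ρ(dv) < +∞, and let J_ρ(b) = ∫₀^∞ (e^{−bv} − 1 + bv) ρ(dv) for b ≥ 0. Then the function b ↦ J_ρ(b)/b is strictly increasing on (0, +∞) and lim_{b→0+} J_ρ(b)/b = 0; the function b ↦ J_ρ(b)/b² is strictly decreasing on (0, +∞) and lim_{b→+∞} J_ρ(b)/b² = 0. In particular, for any b₀ > 0 and any b ∈ (0, b₀), one has (J_ρ(b₀)/b₀²)·b² < J_ρ(b) < (J_ρ(b₀)/b₀)·b. -/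
open Real Filter Set MeasureTheory



lemma L1 (x : ℝ) : 0 ≤ Real.exp (-x) - 1 + x := by
  nlinarith [Real.add_one_le_exp (-x)]

lemma L4 {x : ℝ} (hx : 0 < x) : Real.exp (-x) * (1 + x) < 1 := by
  have h := Real.add_one_lt_exp (ne_of_gt hx)
  have he : 0 < Real.exp (-x) := Real.exp_pos _
  have hmul : Real.exp (-x) * Real.exp x = 1 := by
    rw [← Real.exp_add]; simp
  nlinarith

lemma L3 {x : ℝ} (hx : 0 ≤ x) : Real.exp (-x) - 1 + x ≤ x := by
  have : Real.exp (-x) ≤ 1 := Real.exp_le_one_iff.mpr (by linarith)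
  linarith

lemma L2 {x : ℝ} (hx : 0 ≤ x) : Real.exp (-x) - 1 + x ≤ x ^ 2 / 2 := by
  have key : MonotoneOn (fun x : ℝ => x ^ 2 / 2 - (Real.exp (-x) - 1 + x)) (Ici 0) := by
    apply monotoneOn_of_deriv_nonneg (convex_Ici 0)
    · fun_prop
    · fun_prop
    · intro t ht
      rw [interior_Ici] at ht
      have hd : HasDerivAt (fun x : ℝ => x ^ 2 / 2 - (Real.exp (-x) - 1 + x))
          (t - (Real.exp (-t) * (-1) + 1)) t := by
        have h1 : HasDerivAt (fun x : ℝ => x ^ 2 / 2) (2 * t ^ 1 / 2) t :=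
          (hasDerivAt_pow 2 t).div_const 2
        have h2 : HasDerivAt (fun x : ℝ => Real.exp (-x) - 1 + x)
            (Real.exp (-t) * (-1) + 1) t := by
          exact (((hasDerivAt_neg t).exp).sub_const 1).add (hasDerivAt_id t)
        simpa [Pi.sub_def] using h1.sub h2
      rw [hd.deriv]
      nlinarith [Real.add_one_le_exp (-t), Real.exp_pos (-t), le_of_lt (mem_Ioi.mp ht)]
  have := key (self_mem_Ici) (mem_Ici.mpr hx) hx
  simp at this; linarith

lemma L5 {x : ℝ} (hx : 0 < x) :
    x * (1 - Real.exp (-x)) < 2 * (Real.exp (-x) - 1 + x) := by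
  have key : StrictMonoOn
      (fun x : ℝ => 2 * (Real.exp (-x) - 1 + x) - x * (1 - Real.exp (-x))) (Ici 0) := by
    apply strictMonoOn_of_deriv_pos (convex_Ici 0)
    · fun_prop
    · intro t ht
      rw [interior_Ici] at ht
      have ht' : 0 < t := mem_Ioi.mp ht
      have hd : HasDerivAt
          (fun x : ℝ => 2 * (Real.exp (-x) - 1 + x) - x * (1 - Real.exp (-x)))
          (2 * (Real.exp (-t) * (-1) + 1) -
            (1 * (1 - Real.exp (-t)) + t * (-(Real.exp (-t) * (-1))))) t := by
        have h2 : HasDerivAt (fun x : ℝ => Real.exp (-x) - 1 + x)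
            (Real.exp (-t) * (-1) + 1) t :=
          (((hasDerivAt_neg t).exp).sub_const 1).add (hasDerivAt_id t)
        have h3 : HasDerivAt (fun x : ℝ => x * (1 - Real.exp (-x)))
            (1 * (1 - Real.exp (-t)) + t * (-(Real.exp (-t) * (-1)))) t :=
          (hasDerivAt_id t).mul ((((hasDerivAt_neg t).exp)).const_sub 1)
        exact (h2.const_mul 2).sub h3
      rw [hd.deriv]
      have := L4 ht'
      nlinarith
  have := key (self_mem_Ici) (mem_Ici.mpr hx.le) hx
  simp at this; linarith
lemma hasDerivF (v t : ℝ) : HasDerivAt (fun t : ℝ => Real.exp (-(t * v)) - 1 + t * v)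
    (Real.exp (-(t * v)) * (-v) + v) t := by
  have h1 : HasDerivAt (fun t : ℝ => t * v) v t := by
    simpa using (hasDerivAt_id t).mul_const v
  exact ((h1.neg.exp).sub_const 1).add h1

lemma M1 {v : ℝ} (hv : 0 < v) :
    StrictMonoOn (fun t => (Real.exp (-(t * v)) - 1 + t * v) / t) (Ioi 0) := by
  apply strictMonoOn_of_deriv_pos (convex_Ioi 0)
  · apply ContinuousOn.div (by fun_prop) continuousOn_id
    intro t ht; exact ne_of_gt (mem_Ioi.mp ht)
  · intro t ht
    rw [interior_Ioi] at ht
    have ht' : 0 < t := mem_Ioi.mp ht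
    have hd : HasDerivAt (fun t => (Real.exp (-(t * v)) - 1 + t * v) / t)
        (((Real.exp (-(t * v)) * (-v) + v) * t - (Real.exp (-(t * v)) - 1 + t * v) * 1) / t ^ 2)
        t := (hasDerivF v t).div (hasDerivAt_id t) (ne_of_gt ht')
    rw [hd.deriv]
    have hx : 0 < t * v := mul_pos ht' hv
    have := L4 hx
    have h2 : (0:ℝ) < t ^ 2 := by positivity
    apply div_pos _ h2
    nlinarith
  
lemma M2 {v : ℝ} (hv : 0 < v) :
    StrictAntiOn (fun t => (Real.exp (-(t * v)) - 1 + t * v) / t ^ 2) (Ioi 0) := by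
  apply strictAntiOn_of_deriv_neg (convex_Ioi 0)
  · apply ContinuousOn.div (by fun_prop) (by fun_prop)
    intro t ht; exact ne_of_gt (pow_pos (mem_Ioi.mp ht) 2)
  · intro t ht
    rw [interior_Ioi] at ht
    have ht' : 0 < t := mem_Ioi.mp ht
    have hd : HasDerivAt (fun t => (Real.exp (-(t * v)) - 1 + t * v) / t ^ 2)
        (((Real.exp (-(t * v)) * (-v) + v) * t ^ 2 -
          (Real.exp (-(t * v)) - 1 + t * v) * (2 * t ^ 1)) / (t ^ 2) ^ 2)
        t := (hasDerivF v t).div (hasDerivAt_pow 2 t) (by positivity)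
    rw [hd.deriv]
    have hx : 0 < t * v := mul_pos ht' hv
    have := L5 hx
    have h2 : (0:ℝ) < (t ^ 2) ^ 2 := by positivity
    apply div_neg_of_neg_of_pos _ h2
    nlinarith
/-- For a Borel measure `ρ` on `(0,∞)` with `0 < ∫ (v² ∧ v) ρ(dv) < ∞` and
`J_ρ(b) = ∫ (e^{−bv} − 1 + bv) ρ(dv)`, the function `b ↦ J_ρ(b)/b` is strictly increasing
on `(0,∞)` with limit `0` at `0+`, and `b ↦ J_ρ(b)/b²` is strictly decreasing on `(0,∞)`
with limit `0` at `+∞`; in particular `(J_ρ(b₀)/b₀²)·b² < J_ρ(b) < (J_ρ(b₀)/b₀)·b` for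
`0 < b < b₀`. -/
theorem stmt1 (ρ : Measure ℝ)
    (hpos : 0 < ∫⁻ v in Set.Ioi (0:ℝ), ENNReal.ofReal (min (v ^ 2) v) ∂ρ)
    (hfin : ∫⁻ v in Set.Ioi (0:ℝ), ENNReal.ofReal (min (v ^ 2) v) ∂ρ < ⊤)
    (J : ℝ → ℝ)
    (hJ : ∀ b ≥ (0:ℝ), J b = ∫ v in Set.Ioi (0:ℝ), (Real.exp (-(b * v)) - 1 + b * v) ∂ρ) :
    StrictMonoOn (fun b => J b / b) (Set.Ioi 0) ∧
    Tendsto (fun b => J b / b) (nhdsWithin 0 (Set.Ioi 0)) (nhds 0) ∧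
    StrictAntiOn (fun b => J b / b ^ 2) (Set.Ioi 0) ∧
    Tendsto (fun b => J b / b ^ 2) atTop (nhds 0) ∧
    ∀ b₀ > (0:ℝ), ∀ b ∈ Set.Ioo 0 b₀,
      (J b₀ / b₀ ^ 2) * b ^ 2 < J b ∧ J b < (J b₀ / b₀) * b := by
  set μ := ρ.restrict (Set.Ioi (0:ℝ)) with hμ
  -- nonnegativity a.e. of min
  have hmin_nonneg : (0:ℝ → ℝ) ≤ᵐ[μ] fun v => min (v ^ 2) v := by
    filter_upwards [ae_restrict_mem measurableSet_Ioi] with v hv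
    exact le_min (by positivity) (le_of_lt hv)
  -- integrability of the dominating function
  have hmin_int : Integrable (fun v => min (v ^ 2) v) μ := by
    refine ⟨((measurable_id.pow_const 2).min measurable_id).aestronglyMeasurable, ?_⟩
    rw [hasFiniteIntegral_iff_ofReal hmin_nonneg]
    exact hfin
  -- positivity of ρ on Ioi 0
  have hρpos : ρ (Set.Ioi 0) ≠ 0 := by
    intro h
    rw [show (∫⁻ v in Set.Ioi (0:ℝ), ENNReal.ofReal (min (v ^ 2) v) ∂ρ) = 0 from by
      rw [Measure.restrict_eq_zero.mpr h, lintegral_zero_measure]] at hpos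
    exact lt_irrefl 0 hpos
  -- pointwise bound
  have hbound : ∀ b ≥ (0:ℝ), ∀ v ∈ Set.Ioi (0:ℝ),
      Real.exp (-(b * v)) - 1 + b * v ≤ (b ^ 2 + b) * min (v ^ 2) v := by
    intro b hb v hv
    have hv' : (0:ℝ) < v := hv
    have hbv : (0:ℝ) ≤ b * v := by positivity
    rcases min_cases (v ^ 2) v with ⟨hm, h'⟩ | ⟨hm, h'⟩ <;> rw [hm]
    · have := L2 hbv; nlinarith
    · have := L3 hbv; nlinarith
  -- integrability of the integrand
  have hint : ∀ b ≥ (0:ℝ),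
      Integrable (fun v => Real.exp (-(b * v)) - 1 + b * v) μ := by
    intro b hb
    refine Integrable.mono' (hmin_int.const_mul (b ^ 2 + b))
      (Continuous.aestronglyMeasurable (by fun_prop)) ?_
    filter_upwards [ae_restrict_mem measurableSet_Ioi] with v hv
    rw [Real.norm_eq_abs, abs_of_nonneg (L1 _)]
    exact hbound b hb v hv
  -- strict comparison of integrals
  have SI : ∀ g h : ℝ → ℝ, Integrable g μ → Integrable h μ →
      (∀ v ∈ Set.Ioi (0:ℝ), g v < h v) → (∫ v, g v ∂μ) < ∫ v, h v ∂μ := by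
    intro g h hg hh hlt
    have hsub : Integrable (fun v => h v - g v) μ := hh.sub hg
    have hnn : (0:ℝ → ℝ) ≤ᵐ[μ] fun v => h v - g v := by
      filter_upwards [ae_restrict_mem measurableSet_Ioi] with v hv
      exact sub_nonneg.mpr (hlt v hv).le
    have hsupp : 0 < μ (Function.support fun v => h v - g v) := by
      have hsub' : Set.Ioi (0:ℝ) ⊆ Function.support fun v => h v - g v := by
        intro v hv; exact ne_of_gt (sub_pos.mpr (hlt v hv))
      calc 0 < ρ (Set.Ioi 0) := pos_iff_ne_zero.mpr hρpos
        _ = μ (Set.Ioi 0) := (Measure.restrict_apply_self ρ _).symm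
        _ ≤ _ := measure_mono hsub'
    have := (integral_pos_iff_support_of_nonneg_ae hnn hsub).mpr hsupp
    rw [integral_sub hh hg] at this
    linarith
  -- strict monotonicity of J b / b
  have part1 : StrictMonoOn (fun b => J b / b) (Set.Ioi 0) := by
    intro a ha b hb hab
    have ha' : (0:ℝ) < a := ha
    have hb' : (0:ℝ) < b := hb
    simp only
    rw [hJ a ha'.le, hJ b hb'.le, div_lt_div_iff₀ ha' hb', ← integral_mul_const,
      ← integral_mul_const]
    refine SI _ _ ((hint a ha'.le).mul_const b) ((hint b hb'.le).mul_const a) ?_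
    intro v hv
    have hv' : (0:ℝ) < v := hv
    have := M1 hv' ha hb hab
    simp only at this
    rw [div_lt_div_iff₀ ha' hb'] at this
    exact this
  -- strict antitonicity of J b / b ^ 2
  have part3 : StrictAntiOn (fun b => J b / b ^ 2) (Set.Ioi 0) := by
    intro a ha b hb hab
    have ha' : (0:ℝ) < a := ha
    have hb' : (0:ℝ) < b := hb
    simp only
    rw [hJ a ha'.le, hJ b hb'.le, div_lt_div_iff₀ (by positivity) (by positivity),
      ← integral_mul_const, ← integral_mul_const]
    refine SI _ _ ((hint b hb'.le).mul_const (a ^ 2)) ((hint a ha'.le).mul_const (b ^ 2)) ?_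
    intro v hv
    have hv' : (0:ℝ) < v := hv
    have := M2 hv' ha hb hab
    simp only at this
    rw [div_lt_div_iff₀ (by positivity) (by positivity)] at this
    exact this
  -- limit at 0+
  have part2 : Tendsto (fun b => J b / b) (nhdsWithin 0 (Set.Ioi 0)) (nhds 0) := by
    have key : Tendsto (fun b => ∫ v, (Real.exp (-(b * v)) - 1 + b * v) / b ∂μ)
        (nhdsWithin 0 (Set.Ioi 0)) (nhds 0) := by
      have h0 : (∫ v, (0:ℝ) ∂μ) = 0 := integral_zero _ _
      suffices h : Tendsto (fun b => ∫ v, (Real.exp (-(b * v)) - 1 + b * v) / b ∂μ)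
          (nhdsWithin 0 (Set.Ioi 0)) (nhds (∫ v, (0:ℝ) ∂μ)) by rwa [h0] at h
      refine tendsto_integral_filter_of_dominated_convergence (fun v => min (v ^ 2) v)
        (Eventually.of_forall fun b => Continuous.aestronglyMeasurable (by fun_prop))
        ?_ hmin_int ?_
      · filter_upwards [Ioo_mem_nhdsGT_of_mem (left_mem_Ico.mpr one_pos)] with b hb
        filter_upwards [ae_restrict_mem measurableSet_Ioi] with v hv
        have hb' : 0 < b := hb.1
        have hb1 : b ≤ 1 := hb.2.le
        have hv' : (0:ℝ) < v := hv
        have hbv : (0:ℝ) ≤ b * v := by positivity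
        rw [Real.norm_eq_abs, abs_of_nonneg (div_nonneg (L1 _) hb'.le), div_le_iff₀ hb']
        rcases min_cases (v ^ 2) v with ⟨hm, h'⟩ | ⟨hm, h'⟩ <;> rw [hm]
        · have := L2 hbv; nlinarith
        · have := L3 hbv; nlinarith
      · filter_upwards [ae_restrict_mem measurableSet_Ioi] with v hv
        have hv' : (0:ℝ) < v := hv
        apply squeeze_zero' (g := fun b => b * (v ^ 2 / 2))
        · filter_upwards [self_mem_nhdsWithin] with b hb
          exact div_nonneg (L1 _) (le_of_lt hb)
        · filter_upwards [self_mem_nhdsWithin] with b hb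
          have hb' : (0:ℝ) < b := hb
          rw [div_le_iff₀ hb']
          have := L2 (show (0:ℝ) ≤ b * v by positivity)
          nlinarith
        · have : Tendsto (fun b : ℝ => b * (v ^ 2 / 2)) (nhdsWithin 0 (Set.Ioi 0))
              (nhds (0 * (v ^ 2 / 2))) :=
            (tendsto_id.mono_left nhdsWithin_le_nhds).mul_const _
          simpa using this
    refine key.congr' ?_
    filter_upwards [self_mem_nhdsWithin] with b hb
    have hb' : (0:ℝ) < b := hb
    rw [hJ b hb'.le, ← integral_div]
  -- limit at atTop
  have part4 : Tendsto (fun b => J b / b ^ 2) atTop (nhds 0) := by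
    have key : Tendsto (fun b => ∫ v, (Real.exp (-(b * v)) - 1 + b * v) / b ^ 2 ∂μ)
        atTop (nhds 0) := by
      have h0 : (∫ v, (0:ℝ) ∂μ) = 0 := integral_zero _ _
      suffices h : Tendsto (fun b => ∫ v, (Real.exp (-(b * v)) - 1 + b * v) / b ^ 2 ∂μ)
          atTop (nhds (∫ v, (0:ℝ) ∂μ)) by rwa [h0] at h
      refine tendsto_integral_filter_of_dominated_convergence (fun v => min (v ^ 2) v)
        (Eventually.of_forall fun b => Continuous.aestronglyMeasurable (by fun_prop))
        ?_ hmin_int ?_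
      · filter_upwards [eventually_ge_atTop (1:ℝ)] with b hb
        filter_upwards [ae_restrict_mem measurableSet_Ioi] with v hv
        have hb' : (0:ℝ) < b := lt_of_lt_of_le one_pos hb
        have hv' : (0:ℝ) < v := hv
        have hbv : (0:ℝ) ≤ b * v := by positivity
        rw [Real.norm_eq_abs, abs_of_nonneg (div_nonneg (L1 _) (by positivity)),
          div_le_iff₀ (by positivity : (0:ℝ) < b ^ 2)]
        rcases min_cases (v ^ 2) v with ⟨hm, h'⟩ | ⟨hm, h'⟩ <;> rw [hm]
        · have := L2 hbv; nlinarith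
        · have := L3 hbv; nlinarith
      · filter_upwards [ae_restrict_mem measurableSet_Ioi] with v hv
        have hv' : (0:ℝ) < v := hv
        apply squeeze_zero' (g := fun b => v / b)
        · filter_upwards [eventually_gt_atTop (0:ℝ)] with b hb
          exact div_nonneg (L1 _) (by positivity)
        · filter_upwards [eventually_gt_atTop (0:ℝ)] with b hb
          rw [div_le_div_iff₀ (by positivity) hb]
          have := L3 (show (0:ℝ) ≤ b * v by positivity)
          nlinarith
        · exact tendsto_const_nhds.div_atTop tendsto_id
    refine key.congr' ?_
    filter_upwards [eventually_gt_atTop (0:ℝ)] with b hb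
    rw [hJ b hb.le, ← integral_div]
  refine ⟨part1, part2, part3, part4, ?_⟩
  intro b₀ hb₀ b hb
  constructor
  · have h := part3 hb.1 (mem_Ioi.mpr hb₀) hb.2
    simp only at h
    exact (lt_div_iff₀ (pow_pos hb.1 2)).mp h
  · have h := part1 hb.1 (mem_Ioi.mpr hb₀) hb.2
    simp only at h
    exact (div_lt_iff₀ hb.1).mp h
end

section
/- The function H : [0, +∞) → ℝ defined by H(z) = e^{−z} − 1 + z is convex and strictly increasing on [0, +∞), and for every z ≥ 0 and every t > 0 it satisfies min{1, t²}·H(z) ≤ H(t·z) ≤ max{1, t²}·H(z). -/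
open Real Set

private lemma H_nonneg (z : ℝ) : 0 ≤ Real.exp (-z) - 1 + z := by
  have := Real.add_one_le_exp (-z)
  linarith

private lemma H_hasDeriv (z : ℝ) :
    HasDerivAt (fun z : ℝ => Real.exp (-z) - 1 + z) (Real.exp (-z) * (-1) + 1) z := by
  exact (((hasDerivAt_neg z).exp).sub_const 1).add (hasDerivAt_id z)

-- Lemma A: for t ≥ 1, z ≥ 0: 1 - exp(-(t*z)) ≤ t * (1 - exp(-z))
private lemma lemA {t : ℝ} (ht : 1 ≤ t) {z : ℝ} (hz : 0 ≤ z) :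
    1 - Real.exp (-(t * z)) ≤ t * (1 - Real.exp (-z)) := by
  set g : ℝ → ℝ := fun z => t * (1 - Real.exp (-z)) - (1 - Real.exp (-(t * z))) with hg
  have hderiv : ∀ x : ℝ, HasDerivAt g (t * Real.exp (-x) - Real.exp (-(t*x)) * t) x := by
    intro x
    have h1 : HasDerivAt (fun x : ℝ => Real.exp (-x)) (Real.exp (-x) * (-1)) x :=
      (hasDerivAt_neg x).exp
    have h2 : HasDerivAt (fun x : ℝ => Real.exp (-(t * x))) (Real.exp (-(t*x)) * (-t)) x := by
      have h : HasDerivAt (fun x : ℝ => -(t * x)) (-t) x := by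
        simpa using (hasDerivAt_id x).const_mul (-t)
      simpa using h.exp
    have := (((h1).const_sub 1).const_mul t).sub ((h2).const_sub 1)
    exact this.congr_deriv (by ring)
  have hmono : MonotoneOn g (Set.Ici 0) := by
    apply monotoneOn_of_deriv_nonneg (convex_Ici 0)
      (fun x hx => (hderiv x).continuousAt.continuousWithinAt)
      (fun x hx => (hderiv x).differentiableAt.differentiableWithinAt)
    intro x hx
    rw [(hderiv x).deriv]
    rw [interior_Ici] at hx
    have hx' : (0:ℝ) < x := hx
    have : Real.exp (-(t * x)) ≤ Real.exp (-x) := by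
      apply Real.exp_le_exp.mpr; nlinarith
    nlinarith [Real.exp_pos (-(t*x))]
  have := hmono (le_refl (0:ℝ)) hz hz
  simp only [hg] at this
  simp at this
  linarith [this]

-- Key: H(t z) ≤ max 1 t² * H z
private lemma keyUB {z : ℝ} (hz : 0 ≤ z) {t : ℝ} (ht : 0 < t) :
    Real.exp (-(t * z)) - 1 + t * z ≤ max 1 (t ^ 2) * (Real.exp (-z) - 1 + z) := by
  set M := max 1 (t ^ 2) with hM
  set ψ : ℝ → ℝ := fun z => M * (Real.exp (-z) - 1 + z) - (Real.exp (-(t * z)) - 1 + t * z)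
    with hψ
  have hderiv : ∀ x : ℝ, HasDerivAt ψ
      (M * (Real.exp (-x) * (-1) + 1) - (Real.exp (-(t*x)) * (-t) + t)) x := by
    intro x
    have h1 := (H_hasDeriv x).const_mul M
    have h2 : HasDerivAt (fun x : ℝ => Real.exp (-(t * x)) - 1 + t * x)
        (Real.exp (-(t*x)) * (-t) + t) x := by
      have ha : HasDerivAt (fun x : ℝ => -(t * x)) (-t) x := by
        simpa using (hasDerivAt_id x).const_mul (-t)
      have hb := ha.exp
      have := (hb.sub_const 1).add ((hasDerivAt_id x).const_mul t)
      exact this.congr_deriv (by ring)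
    exact h1.sub h2
  have hM1 : 1 ≤ M := le_max_left _ _
  have hmono : MonotoneOn ψ (Set.Ici 0) := by
    apply monotoneOn_of_deriv_nonneg (convex_Ici 0)
      (fun x hx => (hderiv x).continuousAt.continuousWithinAt)
      (fun x hx => (hderiv x).differentiableAt.differentiableWithinAt)
    intro x hx
    rw [(hderiv x).deriv]
    rw [interior_Ici] at hx
    have hx' : (0:ℝ) < x := hx
    have hex : Real.exp (-x) ≤ 1 := Real.exp_le_one_iff.mpr (by linarith)
    have hetx : Real.exp (-(t*x)) ≤ 1 := Real.exp_le_one_iff.mpr (by nlinarith)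
    rcases le_or_gt t 1 with h | h
    · -- M ≥ 1, t ≤ 1: t*(1-e^{-tx}) ≤ 1-e^{-tx} ≤ 1-e^{-x}
      have hle : Real.exp (-x) ≤ Real.exp (-(t * x)) := by
        apply Real.exp_le_exp.mpr; nlinarith
      nlinarith
    · -- t ≥ 1: use lemA, M ≥ t²
      have hA := lemA h.le hx'.le
      have hM2 : t ^ 2 ≤ M := le_max_right _ _
      nlinarith
  have := hmono (le_refl (0:ℝ)) hz hz
  simp only [hψ] at this
  simp at this
  linarith [this]

/-- The function `H(z) = e^{−z} − 1 + z` is convex and strictly increasing on `[0,∞)`,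
and satisfies `min{1,t²}·H(z) ≤ H(t·z) ≤ max{1,t²}·H(z)` for all `z ≥ 0`, `t > 0`. -/
theorem stmt2 :
    ConvexOn ℝ (Set.Ici 0) (fun z : ℝ => Real.exp (-z) - 1 + z) ∧
    StrictMonoOn (fun z : ℝ => Real.exp (-z) - 1 + z) (Set.Ici 0) ∧
    ∀ z ≥ (0:ℝ), ∀ t > (0:ℝ),
      min 1 (t ^ 2) * (Real.exp (-z) - 1 + z) ≤ Real.exp (-(t * z)) - 1 + t * z ∧
      Real.exp (-(t * z)) - 1 + t * z ≤ max 1 (t ^ 2) * (Real.exp (-z) - 1 + z) := by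
  refine ⟨?_, ?_, ?_⟩
  · -- convexity via second derivative
    have h1 : ConvexOn ℝ (Set.Ici 0) (fun z : ℝ => Real.exp (-z)) := by
      have h := (convexOn_exp.comp_affineMap (-(AffineMap.id ℝ ℝ))).subset
        (Set.subset_univ _) (convex_Ici 0)
      exact h
    have h2 : ConvexOn ℝ (Set.Ici 0) (fun z : ℝ => z + (-1)) :=
      (convexOn_id (convex_Ici 0)).add_const (-1)
    have := h1.add h2
    exact this.congr (fun z _ => by simp only [Pi.add_apply]; ring)
  · -- strict monotonicity
    apply strictMonoOn_of_deriv_pos (convex_Ici 0)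
    · exact Continuous.continuousOn (by continuity)
    · intro x hx
      rw [interior_Ici] at hx
      rw [(H_hasDeriv x).deriv]
      have : Real.exp (-x) < 1 := Real.exp_lt_one_iff.mpr (by linarith [hx.out])
      nlinarith
  · intro z hz t ht
    refine ⟨?_, keyUB hz ht⟩
    -- lower bound from keyUB with z' = t*z, t' = 1/t
    have htz : 0 ≤ t * z := by positivity
    have h := keyUB htz (inv_pos.mpr ht)
    have hid : t⁻¹ * (t * z) = z := by field_simp
    rw [hid] at h
    have hmin : 0 ≤ min 1 (t ^ 2) := le_min zero_le_one (by positivity)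
    have hti : t * t⁻¹ = 1 := mul_inv_cancel₀ ht.ne'
    have htinv : 0 < t⁻¹ := inv_pos.mpr ht
    have hprod : min 1 (t ^ 2) * max 1 (t⁻¹ ^ 2) = 1 := by
      rcases le_total t 1 with h1 | h1
      · have h1i : 1 ≤ t⁻¹ := by nlinarith
        rw [min_eq_right (by nlinarith), max_eq_right (by nlinarith)]
        field_simp
      · have h1i : t⁻¹ ≤ 1 := by nlinarith
        rw [min_eq_left (by nlinarith), max_eq_left (by nlinarith)]
        norm_num
    have := mul_le_mul_of_nonneg_left h hmin
    rw [← mul_assoc, hprod, one_mul] at this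
    linarith [this]
end

section
/- Let λ be a finite Borel measure on the unit sphere S^{d−1} ⊂ ℝ^d and γ a Borel measure on (0, +∞) with ∫₀^∞ (r² ∧ r) γ(dr) < +∞. Let H(z) = e^{−z} − 1 + z, and for z ∈ ℝ^d set J(z) = ∫_{S^{d−1}} ∫₀^∞ H(r·⟨z, ξ⟩) γ(dr) λ(dξ), and for s ≥ 0 set M(s) = ∫_{S^{d−1}} ∫₀^∞ H(s·r·⟨G_∞, ξ⟩) γ(dr) λ(dξ), where G_∞ ∈ S^{d−1} is a fixed unit vector. Let G : (0, +∞) → ℝ^d satisfy G(x) ≠ 0 and λ{ ξ : ⟨G(x), ξ⟩ < 0 } = 0 for every x > 0, and assume λ{ ξ : ⟨G_∞, ξ⟩ < 0 } = 0 and λ{ ξ : ⟨G_∞, ξ⟩ > 0 } > 0. Then for every ε₀ > 0 there exists δ > 0 such that for every b ≥ 0 and every x > 0 with |G(x)/|G(x)| − G_∞| ≤ δ, one has (1 − ε₀)·M(b·|G(x)|) ≤ J(b·G(x)) ≤ (1 + ε₀)·M(b·|G(x)|). -/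
open Real Filter Set MeasureTheory
open scoped ENNReal


noncomputable def Hf (z : ℝ) : ℝ := Real.exp (-z) - 1 + z

lemma Hf_nonneg (z : ℝ) : 0 ≤ Hf z := by
  have := Real.add_one_le_exp (-z)
  simp [Hf]; linarith

lemma Hf_mono {a b : ℝ} (ha : 0 ≤ a) (hab : a ≤ b) : Hf a ≤ Hf b := by
  have h1 : Real.exp (-a) - Real.exp (-b) ≤ b - a := by
    have h2 : Real.exp (-a) - Real.exp (-b) = Real.exp (-a) * (1 - Real.exp (-(b-a))) := by
      rw [mul_sub, mul_one, ← Real.exp_add]; ring_nf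
    have h3 : Real.exp (-a) ≤ 1 := Real.exp_le_one_iff.mpr (by linarith)
    have h4 : 1 - Real.exp (-(b-a)) ≤ b - a := by
      have := Real.add_one_le_exp (-(b-a)); linarith
    have h5 : 0 ≤ 1 - Real.exp (-(b-a)) := by
      have : Real.exp (-(b-a)) ≤ 1 := Real.exp_le_one_iff.mpr (by linarith)
      linarith
    calc Real.exp (-a) - Real.exp (-b) = Real.exp (-a) * (1 - Real.exp (-(b-a))) := h2
    _ ≤ 1 * (b - a) := mul_le_mul h3 h4 h5 one_pos.le
    _ = b - a := one_mul _
  simp only [Hf]; linarith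

lemma Hf_le_self {z : ℝ} (hz : 0 ≤ z) : Hf z ≤ z := by
  have : Real.exp (-z) ≤ 1 := Real.exp_le_one_iff.mpr (by linarith)
  simp only [Hf]; linarith

lemma Hf_le_sq {z : ℝ} (hz : 0 ≤ z) : Hf z ≤ z ^ 2 := by
  have h1 : Real.exp (-z) ≤ 1 / (1 + z) := by
    rw [div_eq_inv_mul, mul_one, ← Real.exp_log (by positivity : (0:ℝ) < 1 + z), ← Real.exp_neg]
    apply Real.exp_le_exp.mpr
    have := Real.add_one_le_exp (Real.log (1+z))
    have hl : Real.log (1+z) ≤ z := by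
      have := Real.log_le_sub_one_of_pos (by positivity : (0:ℝ) < 1+z); linarith
    linarith
  have h2 : 1 / (1 + z) - 1 + z = z^2 / (1+z) := by field_simp; ring
  have h3 : z^2 / (1+z) ≤ z^2 := by
    apply div_le_self (by positivity); linarith
  simp only [Hf]; linarith

lemma Hf_scale {α z : ℝ} (hα0 : 0 ≤ α) (hα1 : α ≤ 1) : Hf (α * z) ≤ α * Hf z := by
  have hc := convexOn_exp.2 (mem_univ (-z)) (mem_univ (0:ℝ)) hα0 (by linarith) (by ring : α + (1 - α) = 1)
  simp only [smul_eq_mul, mul_zero, add_zero, Real.exp_zero, mul_one] at hc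
  have : Real.exp (-(α * z)) ≤ α * Real.exp (-z) + (1 - α) := by
    rw [show -(α * z) = α * -z by ring]; exact hc
  simp only [Hf]; nlinarith

lemma Hf_mul_le {c z : ℝ} (hc : 1 ≤ c) (hz : 0 ≤ z) : Hf (c * z) ≤ c ^ 2 * Hf z := by
  -- key: 1 - exp (-(c*z)) ≤ c * (1 - exp (-z)), via Bernoulli
  -- f z := c^2 * Hf z - Hf (c*z), f 0 = 0, f' z = c*(c*(1-exp(-z)) - (1-exp(-c*z))) ≥ 0
  have key : ∀ w : ℝ, 0 ≤ w → 1 - Real.exp (-(c*w)) ≤ c * (1 - Real.exp (-w)) := by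
    intro w hw
    have ht : Real.exp (-(c*w)) = (1 + (Real.exp (-w) - 1)) ^ c := by
      rw [show (1 + (Real.exp (-w) - 1)) = Real.exp (-w) by ring, ← Real.exp_mul]
      ring_nf
    have hb := one_add_mul_self_le_rpow_one_add
      (s := Real.exp (-w) - 1) (by nlinarith [Real.exp_nonneg (-w)]) hc
    rw [← ht] at hb
    nlinarith
  set f : ℝ → ℝ := fun z => c^2 * Hf z - Hf (c * z) with hf
  have hderiv : ∀ w : ℝ, HasDerivAt f (c^2 * (1 - Real.exp (-w)) - c * (1 - Real.exp (-(c*w)))) w := by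
    intro w
    have h1 : HasDerivAt (fun z : ℝ => Hf z) (1 - Real.exp (-w)) w := by
      have := ((Real.hasDerivAt_exp (-w)).comp w (hasDerivAt_neg w)).sub_const 1 |>.add (hasDerivAt_id w)
      simpa [Hf, mul_comm, sub_eq_neg_add, Pi.add_def] using this
    have h2 : HasDerivAt (fun z : ℝ => Hf (c * z)) (c * (1 - Real.exp (-(c*w)))) w := by
      have h3 : HasDerivAt (fun z : ℝ => c * z) c w := by
        simpa using (hasDerivAt_id w).const_mul c
      have h4 : HasDerivAt (fun z : ℝ => Hf z) (1 - Real.exp (-(c*w))) (c*w) := by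
        have := ((Real.hasDerivAt_exp (-(c*w))).comp (c*w) (hasDerivAt_neg (c*w))).sub_const 1 |>.add (hasDerivAt_id (c*w))
        simpa [Hf, mul_comm, sub_eq_neg_add, Pi.add_def] using this
      simpa [mul_comm, Function.comp_def] using h4.comp w h3
    simpa [hf, Pi.sub_def] using (h1.const_mul (c^2)).sub h2
  have hmono : MonotoneOn f (Set.Ici (0:ℝ)) := by
    apply monotoneOn_of_deriv_nonneg (convex_Ici 0)
      (Continuous.continuousOn (by
        have : Continuous f := by
          simp only [hf, Hf]; fun_prop
        exact this))
      (fun w hw => (hderiv w).differentiableAt.differentiableWithinAt)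
    intro w hw
    rw [(hderiv w).deriv]
    have hw0 : 0 ≤ w := le_of_lt (by simpa using hw)
    have := key w hw0
    nlinarith [Real.exp_le_one_iff.mpr (by linarith : -w ≤ 0)]
  have h0 : f 0 = 0 := by simp [hf, Hf]
  have := hmono (Set.self_mem_Ici) (Set.mem_Ici.mpr hz) hz
  rw [h0] at this
  simp only [hf] at this
  linarith


lemma Hf_def : Hf = fun z : ℝ => Real.exp (-z) - 1 + z := rfl

lemma Hf_continuous : Continuous Hf := by
  rw [Hf_def]; fun_prop

lemma sigmaFinite_gamma (γ : Measure ℝ)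
    (hγ : ∫⁻ r in Set.Ioi (0:ℝ), ENNReal.ofReal (min (r ^ 2) r) ∂γ < ⊤) :
    SigmaFinite (γ.restrict (Set.Ioi (0:ℝ))) := by
  set μ := γ.restrict (Set.Ioi (0:ℝ)) with hμ
  have hfmeas : Measurable (fun r : ℝ => ENNReal.ofReal (min (r ^ 2) r)) := by
    apply ENNReal.measurable_ofReal.comp; fun_prop
  have key : ∀ n : ℕ, μ ({r : ℝ | 1/(n+1) ≤ min (r^2) r} ∪ Set.Iic 0) < ⊤ := by
    intro n
    have h1 : μ ({r : ℝ | 1/(n+1) ≤ min (r^2) r}) < ⊤ := by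
      have hsub : {r : ℝ | 1/((n:ℝ)+1) ≤ min (r^2) r} ⊆
          {r : ℝ | ENNReal.ofReal (1/((n:ℝ)+1)) ≤ ENNReal.ofReal (min (r^2) r)} := by
        intro r hr; exact ENNReal.ofReal_le_ofReal hr
      have hm : ENNReal.ofReal (1/((n:ℝ)+1)) *
          μ {r : ℝ | ENNReal.ofReal (1/((n:ℝ)+1)) ≤ ENNReal.ofReal (min (r^2) r)}
          ≤ ∫⁻ r, ENNReal.ofReal (min (r^2) r) ∂μ :=
        mul_meas_ge_le_lintegral hfmeas _
      have hε : (0:ℝ≥0∞) < ENNReal.ofReal (1/((n:ℝ)+1)) := by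
        rw [ENNReal.ofReal_pos]; positivity
      by_contra hcon
      push_neg at hcon
      have htop : μ {r : ℝ | ENNReal.ofReal (1/((n:ℝ)+1)) ≤ ENNReal.ofReal (min (r^2) r)} = ⊤ :=
        top_le_iff.mp (le_trans hcon (measure_mono hsub))
      rw [htop, ENNReal.mul_top hε.ne'] at hm
      exact hγ.ne (top_le_iff.mp hm)
    have h2 : μ (Set.Iic 0) = 0 := by
      rw [hμ, Measure.restrict_apply measurableSet_Iic]
      have : Set.Iic (0:ℝ) ∩ Set.Ioi 0 = ∅ := by
        ext r; simp only [Set.mem_inter_iff, Set.mem_Iic, Set.mem_Ioi, Set.mem_empty_iff_false,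
          iff_false, not_and]
        intro h1 h2; linarith
      rw [this]; exact measure_empty
    calc μ _ ≤ μ {r : ℝ | 1/(n+1) ≤ min (r^2) r} + μ (Set.Iic 0) := measure_union_le _ _
    _ < ⊤ := by rw [h2, add_zero]; exact h1
  constructor
  refine ⟨⟨fun n => {r : ℝ | 1/(n+1) ≤ min (r^2) r} ∪ Set.Iic 0, fun _ => trivial,
    fun n => key n, ?_⟩⟩
  ext r
  simp only [Set.mem_iUnion, Set.mem_univ, iff_true, Set.mem_union, Set.mem_setOf_eq, Set.mem_Iic]
  rcases le_or_gt r 0 with h | h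
  · exact ⟨0, Or.inr h⟩
  · have hmin : 0 < min (r^2) r := lt_min (by positivity) h
    obtain ⟨n, hn⟩ := exists_nat_one_div_lt hmin
    exact ⟨n, Or.inl (le_of_lt hn)⟩

lemma integrable_Hf (γ : Measure ℝ)
    (hγ : ∫⁻ r in Set.Ioi (0:ℝ), ENNReal.ofReal (min (r ^ 2) r) ∂γ < ⊤)
    {a : ℝ} (ha : 0 ≤ a) :
    Integrable (fun r => Hf (r * a)) (γ.restrict (Set.Ioi (0:ℝ))) := by
  constructor
  · exact (Hf_continuous.comp (by fun_prop)).aestronglyMeasurable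
  · rw [hasFiniteIntegral_iff_norm]
    calc ∫⁻ r, ENNReal.ofReal ‖Hf (r * a)‖ ∂(γ.restrict (Set.Ioi 0))
        ≤ ∫⁻ r in Set.Ioi (0:ℝ), ENNReal.ofReal (max a (a^2)) * ENNReal.ofReal (min (r^2) r) ∂γ := by
          apply lintegral_mono_ae
          filter_upwards [ae_restrict_mem measurableSet_Ioi] with r hr
          rw [Real.norm_of_nonneg (Hf_nonneg _), ← ENNReal.ofReal_mul (le_max_of_le_left ha)]
          apply ENNReal.ofReal_le_ofReal
          have hr0 : (0:ℝ) < r := hr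
          have hra : 0 ≤ r * a := by positivity
          rcases le_or_gt r 1 with h1 | h1
          · have : min (r^2) r = r^2 := min_eq_left (by nlinarith)
            rw [this]
            calc Hf (r * a) ≤ (r*a)^2 := Hf_le_sq hra
            _ = a^2 * r^2 := by ring
            _ ≤ max a (a^2) * r^2 := by nlinarith [le_max_right a (a^2)]
          · have : min (r^2) r = r := min_eq_right (by nlinarith)
            rw [this]
            calc Hf (r * a) ≤ r * a := Hf_le_self hra
            _ = a * r := by ring
            _ ≤ max a (a^2) * r := by nlinarith [le_max_left a (a^2)]
    _ = ENNReal.ofReal (max a (a^2)) * ∫⁻ r in Set.Ioi (0:ℝ), ENNReal.ofReal (min (r^2) r) ∂γ := by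
          rw [lintegral_const_mul]
          apply ENNReal.measurable_ofReal.comp; fun_prop
    _ < ⊤ := ENNReal.mul_lt_top ENNReal.ofReal_lt_top hγ

noncomputable def phi (γ : Measure ℝ) (a : ℝ) : ℝ := ∫ r in Set.Ioi (0:ℝ), Hf (r * a) ∂γ

lemma phi_nonneg (γ : Measure ℝ) (a : ℝ) : 0 ≤ phi γ a :=
  integral_nonneg fun r => Hf_nonneg _

lemma phi_mono (γ : Measure ℝ)
    (hγ : ∫⁻ r in Set.Ioi (0:ℝ), ENNReal.ofReal (min (r ^ 2) r) ∂γ < ⊤)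
    {a b : ℝ} (ha : 0 ≤ a) (hab : a ≤ b) : phi γ a ≤ phi γ b := by
  apply integral_mono_ae (integrable_Hf γ hγ ha) (integrable_Hf γ hγ (le_trans ha hab))
  filter_upwards [ae_restrict_mem measurableSet_Ioi] with r hr
  have hr0 : (0:ℝ) < r := hr
  exact Hf_mono (by positivity) (by nlinarith)

lemma phi_scale (γ : Measure ℝ)
    (hγ : ∫⁻ r in Set.Ioi (0:ℝ), ENNReal.ofReal (min (r ^ 2) r) ∂γ < ⊤)
    {α a : ℝ} (hα0 : 0 ≤ α) (hα1 : α ≤ 1) (ha : 0 ≤ a) :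
    phi γ (α * a) ≤ α * phi γ a := by
  have h1 : phi γ (α * a) ≤ ∫ r in Set.Ioi (0:ℝ), α * Hf (r * a) ∂γ := by
    apply integral_mono_ae (integrable_Hf γ hγ (by positivity))
      ((integrable_Hf γ hγ ha).const_mul α)
    filter_upwards [] with r
    calc Hf (r * (α * a)) = Hf (α * (r * a)) := by ring_nf
    _ ≤ α * Hf (r * a) := Hf_scale hα0 hα1
  rwa [integral_const_mul] at h1

lemma phi_rescale (γ : Measure ℝ)
    (hγ : ∫⁻ r in Set.Ioi (0:ℝ), ENNReal.ofReal (min (r ^ 2) r) ∂γ < ⊤)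
    {c a : ℝ} (hc : 1 ≤ c) (ha : 0 ≤ a) :
    phi γ (c * a) ≤ c ^ 2 * phi γ a := by
  have h1 : phi γ (c * a) ≤ ∫ r in Set.Ioi (0:ℝ), c^2 * Hf (r * a) ∂γ := by
    apply integral_mono_ae (integrable_Hf γ hγ (by nlinarith))
      ((integrable_Hf γ hγ ha).const_mul _)
    filter_upwards [ae_restrict_mem measurableSet_Ioi] with r hr
    have hr0 : (0:ℝ) < r := hr
    calc Hf (r * (c * a)) = Hf (c * (r * a)) := by ring_nf
    _ ≤ c^2 * Hf (r * a) := Hf_mul_le hc (by positivity)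
  rwa [integral_const_mul] at h1


set_option maxHeartbeats 2000000 in
/-- Proposition on spherical Lévy noise: with `H(z) = e^{−z} − 1 + z`,
`J(z) = ∫∫ H(r⟨z,ξ⟩) γ(dr) λ(dξ)` and `M(s) = ∫∫ H(s·r·⟨G_∞,ξ⟩) γ(dr) λ(dξ)`,
for every `ε₀ > 0` there is `δ > 0` such that whenever `b ≥ 0`, `x > 0` and
`|G(x)/|G(x)| − G_∞| ≤ δ`, one has
`(1 − ε₀)·M(b·|G(x)|) ≤ J(b·G(x)) ≤ (1 + ε₀)·M(b·|G(x)|)`. -/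
theorem stmt5 (d : ℕ)
    (lam : Measure (EuclideanSpace ℝ (Fin d))) [IsFiniteMeasure lam]
    (hsph : lam (Metric.sphere (0 : EuclideanSpace ℝ (Fin d)) 1)ᶜ = 0)
    (γ : Measure ℝ)
    (hγ : ∫⁻ r in Set.Ioi (0:ℝ), ENNReal.ofReal (min (r ^ 2) r) ∂γ < ⊤)
    (Ginf : EuclideanSpace ℝ (Fin d)) (hGinf : ‖Ginf‖ = 1)
    (G : ℝ → EuclideanSpace ℝ (Fin d))
    (hGne : ∀ x > (0:ℝ), G x ≠ 0)
    (hGpos : ∀ x > (0:ℝ), lam {ξ | (inner ℝ (G x) ξ : ℝ) < 0} = 0)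
    (hpos1 : lam {ξ | (inner ℝ Ginf ξ : ℝ) < 0} = 0)
    (hpos2 : 0 < lam {ξ | 0 < (inner ℝ Ginf ξ : ℝ)}) :
    ∀ ε₀ > (0:ℝ), ∃ δ > (0:ℝ), ∀ b ≥ (0:ℝ), ∀ x > (0:ℝ),
      ‖(‖G x‖)⁻¹ • G x - Ginf‖ ≤ δ →
        (1 - ε₀) * (∫ ξ, (∫ r in Set.Ioi (0:ℝ),
            (Real.exp (-(b * ‖G x‖ * (r * (inner ℝ Ginf ξ : ℝ)))) - 1
              + b * ‖G x‖ * (r * (inner ℝ Ginf ξ : ℝ))) ∂γ) ∂lam)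
          ≤ (∫ ξ, (∫ r in Set.Ioi (0:ℝ),
            (Real.exp (-(r * (inner ℝ (b • G x) ξ : ℝ))) - 1
              + r * (inner ℝ (b • G x) ξ : ℝ)) ∂γ) ∂lam) ∧
        (∫ ξ, (∫ r in Set.Ioi (0:ℝ),
            (Real.exp (-(r * (inner ℝ (b • G x) ξ : ℝ))) - 1
              + r * (inner ℝ (b • G x) ξ : ℝ)) ∂γ) ∂lam)
          ≤ (1 + ε₀) * (∫ ξ, (∫ r in Set.Ioi (0:ℝ),
            (Real.exp (-(b * ‖G x‖ * (r * (inner ℝ Ginf ξ : ℝ)))) - 1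
              + b * ‖G x‖ * (r * (inner ℝ Ginf ξ : ℝ))) ∂γ) ∂lam) := by
  haveI : SigmaFinite (γ.restrict (Set.Ioi (0:ℝ))) := sigmaFinite_gamma γ hγ
  intro ε₀ hε₀
  -- find a level c with positive measure
  obtain ⟨c, hc0, hSc⟩ : ∃ c : ℝ, 0 < c ∧ 0 < lam {ξ | c ≤ (inner ℝ Ginf ξ : ℝ)} := by
    by_contra h
    push_neg at h
    have hsub : {ξ : EuclideanSpace ℝ (Fin d) | 0 < (inner ℝ Ginf ξ : ℝ)} ⊆
        ⋃ n : ℕ, {ξ | 1/((n:ℝ)+1) ≤ (inner ℝ Ginf ξ : ℝ)} := by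
      intro ξ hξ
      have hξ' : (0:ℝ) < (inner ℝ Ginf ξ : ℝ) := hξ
      obtain ⟨n, hn⟩ := exists_nat_one_div_lt hξ'
      exact Set.mem_iUnion.mpr ⟨n, hn.le⟩
    have hz : lam (⋃ n : ℕ, {ξ | 1/((n:ℝ)+1) ≤ (inner ℝ Ginf ξ : ℝ)}) = 0 := by
      apply measure_iUnion_null
      intro n
      have := h (1/((n:ℝ)+1)) (by positivity)
      exact le_antisymm this zero_le
    exact absurd (measure_mono_null hsub hz) hpos2.ne'
  set m' := (lam {ξ | c ≤ (inner ℝ Ginf ξ : ℝ)}).toReal with hm'def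
  have hm' : 0 < m' := ENNReal.toReal_pos hSc.ne' (measure_ne_top lam _)
  set Λ := (lam Set.univ).toReal with hΛdef
  have hΛ0 : 0 ≤ Λ := ENNReal.toReal_nonneg
  set K := Λ / (c * m') with hKdef
  have hK0 : 0 ≤ K := div_nonneg hΛ0 (mul_nonneg hc0.le hm'.le)
  set η := min (min (1/2) (c/2)) (ε₀ / (3 + 2*K)) with hηdef
  have hη0 : 0 < η := by
    apply lt_min (lt_min (by norm_num) (by linarith)) (div_pos hε₀ (by linarith))
  have hη12 : η ≤ 1/2 := by
    have h1 : η ≤ min (1/2) (c/2) := min_le_left _ _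
    have h2 : min (1/2:ℝ) (c/2) ≤ 1/2 := min_le_left _ _
    linarith
  have hηc : 2*η ≤ c := by
    have h1 : η ≤ min (1/2) (c/2) := min_le_left _ _
    have h2 : min (1/2:ℝ) (c/2) ≤ c/2 := min_le_right _ _
    linarith
  have hηeps : (3 + 2*K)*η ≤ ε₀ := by
    have h1 : η ≤ ε₀ / (3 + 2*K) := min_le_right _ _
    have h2 : (0:ℝ) < 3 + 2*K := by linarith
    calc (3 + 2*K)*η ≤ (3 + 2*K) * (ε₀ / (3 + 2*K)) :=
      mul_le_mul_of_nonneg_left h1 h2.le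
    _ = ε₀ := by field_simp
  have hscalarL : 1 - ε₀ ≤ (1-η)^2 * (1-K*η) := by
    have h1 : 0 ≤ K*η*(1-η^2) :=
      mul_nonneg (mul_nonneg hK0 hη0.le) (by nlinarith [hη0.le, hη12])
    have h2 : 0 ≤ K*(η*η) := mul_nonneg hK0 (mul_nonneg hη0.le hη0.le)
    have h3 : 0 ≤ η*η := mul_nonneg hη0.le hη0.le
    nlinarith [hηeps, h1, h2, h3]
  have hscalarU : (1+η)^2 + 2*K*η ≤ 1 + ε₀ := by
    have h2 : η^2 ≤ η := by nlinarith [hη0.le, hη12]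
    nlinarith [hηeps, h2]
  refine ⟨η^2, pow_pos hη0 2, ?_⟩
  intro b hb x hx hδ
  have hGx : G x ≠ 0 := hGne x hx
  have hGxn : 0 < ‖G x‖ := norm_pos_iff.mpr hGx
  set u := (‖G x‖)⁻¹ • G x with hudef
  have hu : ‖u‖ = 1 := by
    rw [hudef, norm_smul, norm_inv, norm_norm, inv_mul_cancel₀ hGxn.ne']
  set s := b * ‖G x‖ with hsdef
  have hs0 : 0 ≤ s := mul_nonneg hb hGxn.le
  set t : EuclideanSpace ℝ (Fin d) → ℝ := fun ξ => (inner ℝ Ginf ξ : ℝ) with htdef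
  set a : EuclideanSpace ℝ (Fin d) → ℝ := fun ξ => (inner ℝ u ξ : ℝ) with hadef
  have hcont_t : Continuous t := Continuous.inner continuous_const continuous_id
  have hcont_a : Continuous a := Continuous.inner continuous_const continuous_id
  -- rewrite integrals
  have hMeq : (∫ ξ, (∫ r in Set.Ioi (0:ℝ),
      (Real.exp (-(b * ‖G x‖ * (r * (inner ℝ Ginf ξ : ℝ)))) - 1
        + b * ‖G x‖ * (r * (inner ℝ Ginf ξ : ℝ))) ∂γ) ∂lam)
      = ∫ ξ, phi γ (s * t ξ) ∂lam := by
    congr 1; funext ξ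
    rw [phi]; congr 1; funext r
    rw [Hf_def]
    have h1 : b * ‖G x‖ * (r * t ξ) = r * (s * t ξ) := by rw [hsdef]; ring
    simp only [htdef] at h1
    rw [h1]
  have hJeq : (∫ ξ, (∫ r in Set.Ioi (0:ℝ),
      (Real.exp (-(r * (inner ℝ (b • G x) ξ : ℝ))) - 1
        + r * (inner ℝ (b • G x) ξ : ℝ)) ∂γ) ∂lam)
      = ∫ ξ, phi γ (s * a ξ) ∂lam := by
    congr 1; funext ξ
    rw [phi]; congr 1; funext r
    rw [Hf_def]
    have h1 : (inner ℝ (b • G x) ξ : ℝ) = s * a ξ := by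
      rw [real_inner_smul_left, hadef]
      simp only [hudef, real_inner_smul_left]
      field_simp
      ring
    rw [h1]
  rw [hMeq, hJeq]
  set Φg : EuclideanSpace ℝ (Fin d) → ℝ := fun ξ => phi γ (s * t ξ) with hΦgdef
  set Φu : EuclideanSpace ℝ (Fin d) → ℝ := fun ξ => phi γ (s * a ξ) with hΦudef
  -- measurability
  have hmeasΦg : StronglyMeasurable Φg := by
    have hf : StronglyMeasurable (fun p : (EuclideanSpace ℝ (Fin d)) × ℝ =>
        Hf (p.2 * (s * t p.1))) :=
      (Hf_continuous.comp (continuous_snd.mul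
        (continuous_const.mul (hcont_t.comp continuous_fst)))).stronglyMeasurable
    exact hf.integral_prod_right'
  have hmeasΦu : StronglyMeasurable Φu := by
    have hf : StronglyMeasurable (fun p : (EuclideanSpace ℝ (Fin d)) × ℝ =>
        Hf (p.2 * (s * a p.1))) :=
      (Hf_continuous.comp (continuous_snd.mul
        (continuous_const.mul (hcont_a.comp continuous_fst)))).stronglyMeasurable
    exact hf.integral_prod_right'
  -- the good a.e. event
  have hae : ∀ᵐ ξ ∂lam, 0 ≤ t ξ ∧ 0 ≤ a ξ ∧ |a ξ - t ξ| ≤ η^2 ∧ t ξ ≤ 1 ∧ a ξ ≤ 1 := by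
    have h1 : ∀ᵐ ξ ∂lam, ‖ξ‖ = 1 := by
      rw [ae_iff]
      apply measure_mono_null _ hsph
      intro ξ hξ
      simp only [Set.mem_compl_iff, Metric.mem_sphere, dist_zero_right]
      exact hξ
    have h2 : ∀ᵐ ξ ∂lam, 0 ≤ t ξ := by
      rw [ae_iff]
      apply measure_mono_null _ hpos1
      intro ξ hξ
      simp only [Set.mem_setOf_eq, not_le] at hξ ⊢
      exact hξ
    have h3 : ∀ᵐ ξ ∂lam, 0 ≤ a ξ := by
      rw [ae_iff]
      apply measure_mono_null _ (hGpos x hx)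
      intro ξ hξ
      simp only [Set.mem_setOf_eq, not_le] at hξ ⊢
      have : a ξ = ‖G x‖⁻¹ * (inner ℝ (G x) ξ : ℝ) := by
        rw [hadef]; simp only [hudef, real_inner_smul_left]
      nlinarith only [inv_pos.mpr hGxn, hξ, this]
    filter_upwards [h1, h2, h3] with ξ hξ1 hξ2 hξ3
    refine ⟨hξ2, hξ3, ?_, ?_, ?_⟩
    · have hdiff : a ξ - t ξ = (inner ℝ (u - Ginf) ξ : ℝ) := by
        rw [inner_sub_left]
      rw [hdiff]
      calc |(inner ℝ (u - Ginf) ξ : ℝ)| ≤ ‖u - Ginf‖ * ‖ξ‖ := abs_real_inner_le_norm _ _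
      _ = ‖u - Ginf‖ := by rw [hξ1, mul_one]
      _ ≤ η^2 := hδ
    · calc t ξ ≤ |t ξ| := le_abs_self _
      _ ≤ ‖Ginf‖ * ‖ξ‖ := abs_real_inner_le_norm _ _
      _ = 1 := by rw [hGinf, hξ1, mul_one]
    · calc a ξ ≤ |a ξ| := le_abs_self _
      _ ≤ ‖u‖ * ‖ξ‖ := abs_real_inner_le_norm _ _
      _ = 1 := by rw [hu, hξ1, mul_one]
  -- integrability over lam
  have hintg : Integrable Φg lam := by
    apply Integrable.mono' (integrable_const (phi γ s)) hmeasΦg.aestronglyMeasurable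
    filter_upwards [hae] with ξ hξ
    rw [Real.norm_of_nonneg (phi_nonneg _ _)]
    have : s * t ξ ≤ s := by nlinarith only [hξ.1, hξ.2.2.2.1, hs0]
    exact le_trans (phi_mono γ hγ (mul_nonneg hs0 hξ.1) this) le_rfl
  have hintu : Integrable Φu lam := by
    apply Integrable.mono' (integrable_const (phi γ s)) hmeasΦu.aestronglyMeasurable
    filter_upwards [hae] with ξ hξ
    rw [Real.norm_of_nonneg (phi_nonneg _ _)]
    have : s * a ξ ≤ s := by nlinarith only [hξ.2.1, hξ.2.2.2.2, hs0]
    exact phi_mono γ hγ (mul_nonneg hs0 hξ.2.1) this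
  -- the splitting set
  set A : Set (EuclideanSpace ℝ (Fin d)) := {ξ | η ≤ t ξ} with hAdef
  have hA : MeasurableSet A := measurableSet_le measurable_const hcont_t.measurable
  set Mtot := ∫ ξ, Φg ξ ∂lam with hMtotdef
  set Jtot := ∫ ξ, Φu ξ ∂lam with hJtotdef
  set MA := ∫ ξ in A, Φg ξ ∂lam with hMAdef
  set P := ∫ ξ in Aᶜ, Φg ξ ∂lam with hPdef
  set JA := ∫ ξ in A, Φu ξ ∂lam with hJAdef
  set Jc := ∫ ξ in Aᶜ, Φu ξ ∂lam with hJcdef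
  have hΦg0 : ∀ ξ, 0 ≤ Φg ξ := fun ξ => phi_nonneg _ _
  have hΦu0 : ∀ ξ, 0 ≤ Φu ξ := fun ξ => phi_nonneg _ _
  have hMtot0 : 0 ≤ Mtot := integral_nonneg hΦg0
  have hP0 : 0 ≤ P := setIntegral_nonneg hA.compl fun ξ _ => hΦg0 ξ
  have hJc0 : 0 ≤ Jc := setIntegral_nonneg hA.compl fun ξ _ => hΦu0 ξ
  have heqM : MA + P = Mtot := integral_add_compl hA hintg
  have heqJ : JA + Jc = Jtot := integral_add_compl hA hintu
  set φc := phi γ (c * s) with hφcdef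
  have hφc0 : 0 ≤ φc := phi_nonneg _ _
  -- m' * φc ≤ Mtot
  have hf1 : m' * φc ≤ Mtot := by
    have h1 : φc * (lam {ξ | c ≤ (inner ℝ Ginf ξ : ℝ)}).toReal
        ≤ ∫ ξ in {ξ | c ≤ (inner ℝ Ginf ξ : ℝ)}, Φg ξ ∂lam := by
      rw [mul_comm, ← smul_eq_mul, ← measureReal_def]
      apply setIntegral_ge_of_const_le
      · exact measurableSet_le measurable_const hcont_t.measurable
      · exact measure_ne_top lam _
      · intro ξ hξ
        have hξ' : c ≤ t ξ := hξ
        exact phi_mono γ hγ (mul_nonneg hc0.le hs0) (by nlinarith only [hξ', hs0, hc0])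
      · exact hintg.integrableOn
    have h2 : ∫ ξ in {ξ | c ≤ (inner ℝ Ginf ξ : ℝ)}, Φg ξ ∂lam ≤ Mtot :=
      setIntegral_le_integral hintg (Eventually.of_forall hΦg0)
    rw [hm'def]; linarith only [h1, h2]
  have hφcM : φc ≤ Mtot / m' := by
    rw [le_div_iff₀ hm']; linarith only [hf1]
  -- P small
  have hf2 : P ≤ K * η * Mtot := by
    have h1 : P ≤ ∫ _ in Aᶜ, ((η/c) * φc) ∂lam := by
      apply setIntegral_mono_on_ae hintg.integrableOn
        (integrableOn_const (measure_ne_top _ _))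
        hA.compl
      filter_upwards [hae] with ξ hξ hmem
      have hξA : t ξ < η := by
        simp only [hAdef, Set.mem_compl_iff, Set.mem_setOf_eq, not_le] at hmem
        exact hmem
      have hst : s * t ξ ≤ (η/c) * (c * s) := by
        have : (η/c) * (c * s) = η * s := by field_simp
        rw [this]; nlinarith only [hξ.1, hξA, hs0]
      calc Φg ξ ≤ phi γ ((η/c) * (c * s)) :=
        phi_mono γ hγ (mul_nonneg hs0 hξ.1) hst
      _ ≤ (η/c) * φc := phi_scale γ hγ (div_nonneg hη0.le hc0.le)
          (by rw [div_le_one hc0]; linarith only [hηc, hη0.le]) (mul_nonneg hc0.le hs0)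
    rw [setIntegral_const] at h1
    have h2 : (lam Aᶜ).toReal ≤ Λ := by
      rw [hΛdef]
      exact ENNReal.toReal_mono (measure_ne_top _ _) (measure_mono (Set.subset_univ _))
    have h3 : P ≤ Λ * ((η/c) * φc) := by
      have := mul_le_mul_of_nonneg_right h2 (mul_nonneg (div_nonneg hη0.le hc0.le) hφc0)
      rw [smul_eq_mul, measureReal_def] at h1
      linarith only [h1, this]
    calc P ≤ Λ * ((η/c) * φc) := h3
    _ ≤ Λ * ((η/c) * (Mtot/m')) := by
        apply mul_le_mul_of_nonneg_left _ hΛ0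
        exact mul_le_mul_of_nonneg_left hφcM (div_nonneg hη0.le hc0.le)
    _ = K * η * Mtot := by rw [hKdef]; field_simp
  -- Jc small
  have hf3 : Jc ≤ 2 * K * η * Mtot := by
    have h1 : Jc ≤ ∫ _ in Aᶜ, ((2*η/c) * φc) ∂lam := by
      apply setIntegral_mono_on_ae hintu.integrableOn
        (integrableOn_const (measure_ne_top _ _))
        hA.compl
      filter_upwards [hae] with ξ hξ hmem
      have hξA : t ξ < η := by
        simp only [hAdef, Set.mem_compl_iff, Set.mem_setOf_eq, not_le] at hmem
        exact hmem
      have haξ : a ξ ≤ 2*η := by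
        have := abs_le.mp hξ.2.2.1
        nlinarith only [this.2, hξA, hη0.le, hη12]
      have hst : s * a ξ ≤ (2*η/c) * (c * s) := by
        have : (2*η/c) * (c * s) = 2*η * s := by field_simp
        rw [this]; nlinarith only [hξ.2.1, haξ, hs0]
      calc Φu ξ ≤ phi γ ((2*η/c) * (c * s)) :=
        phi_mono γ hγ (mul_nonneg hs0 hξ.2.1) hst
      _ ≤ (2*η/c) * φc := phi_scale γ hγ (by positivity)
          (by rw [div_le_one hc0]; linarith only [hηc]) (mul_nonneg hc0.le hs0)
    rw [setIntegral_const, smul_eq_mul, measureReal_def] at h1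
    have h2 : (lam Aᶜ).toReal ≤ Λ := by
      rw [hΛdef]
      exact ENNReal.toReal_mono (measure_ne_top _ _) (measure_mono (Set.subset_univ _))
    have h3 : Jc ≤ Λ * ((2*η/c) * φc) := by
      have := mul_le_mul_of_nonneg_right h2 (mul_nonneg (div_nonneg (by linarith : (0:ℝ) ≤ 2*η) hc0.le) hφc0)
      linarith only [h1, this]
    calc Jc ≤ Λ * ((2*η/c) * φc) := h3
    _ ≤ Λ * ((2*η/c) * (Mtot/m')) := by
        apply mul_le_mul_of_nonneg_left _ hΛ0
        exact mul_le_mul_of_nonneg_left hφcM (div_nonneg (by linarith : (0:ℝ) ≤ 2*η) hc0.le)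
    _ = 2 * K * η * Mtot := by rw [hKdef]; field_simp
  have hη1 : η < 1 := by linarith only [hη12]
  -- comparison on A
  have hf4 : (1-η)^2 * MA ≤ JA := by
    have h1 : ∫ ξ in A, ((1-η)^2 * Φg ξ) ∂lam ≤ JA := by
      apply setIntegral_mono_on_ae ((hintg.const_mul _).integrableOn)
        hintu.integrableOn hA
      filter_upwards [hae] with ξ hξ hmem
      have hξA : η ≤ t ξ := hmem
      obtain ⟨ht0, ha0, habs, ht1, ha1⟩ := hξ
      have hlow : (1-η) * t ξ ≤ a ξ := by
        have := abs_le.mp habs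
        nlinarith only [this.1, hξA, hη0.le]
      have hne : (1:ℝ) - η ≠ 0 := sub_ne_zero.mpr (ne_of_gt hη1)
      have hb1 : phi γ (s * t ξ) ≤ ((1-η)⁻¹)^2 * phi γ ((1-η) * (s * t ξ)) := by
        have heq : (1-η)⁻¹ * ((1-η) * (s * t ξ)) = s * t ξ := by
          rw [← mul_assoc, inv_mul_cancel₀ hne, one_mul]
        calc phi γ (s * t ξ) = phi γ ((1-η)⁻¹ * ((1-η) * (s * t ξ))) := by rw [heq]
        _ ≤ ((1-η)⁻¹)^2 * phi γ ((1-η) * (s * t ξ)) := by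
            apply phi_rescale γ hγ
            · rw [le_inv_comm₀] <;> linarith only [hη1, hη0.le, hη12]
            · exact mul_nonneg (by linarith only [hη1] : (0:ℝ) ≤ 1-η) (mul_nonneg hs0 ht0)
      have hb2 : phi γ ((1-η) * (s * t ξ)) ≤ phi γ (s * a ξ) := by
        apply phi_mono γ hγ (mul_nonneg (by linarith only [hη1] : (0:ℝ) ≤ 1-η) (mul_nonneg hs0 ht0))
        have h9 := mul_le_mul_of_nonneg_left hlow hs0
        linarith only [h9, (by ring : s * ((1-η) * t ξ) = (1-η) * (s * t ξ))]
      have hpos : (0:ℝ) < (1-η)^2 := pow_pos (by linarith only [hη1] : (0:ℝ) < 1-η) 2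
      have := mul_le_mul_of_nonneg_left hb1 hpos.le
      have hinv : (1-η)^2 * ((1-η)⁻¹)^2 = 1 := by
        rw [← mul_pow, mul_inv_cancel₀ hne, one_pow]
      calc (1-η)^2 * Φg ξ = (1-η)^2 * phi γ (s * t ξ) := rfl
      _ ≤ (1-η)^2 * (((1-η)⁻¹)^2 * phi γ ((1-η) * (s * t ξ))) := by linarith only [this]
      _ = phi γ ((1-η) * (s * t ξ)) := by rw [← mul_assoc, hinv, one_mul]
      _ ≤ phi γ (s * a ξ) := hb2
      _ = Φu ξ := rfl
    rwa [integral_const_mul] at h1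
  have hf5 : JA ≤ (1+η)^2 * MA := by
    have h1 : JA ≤ ∫ ξ in A, ((1+η)^2 * Φg ξ) ∂lam := by
      apply setIntegral_mono_on_ae hintu.integrableOn
        ((hintg.const_mul _).integrableOn) hA
      filter_upwards [hae] with ξ hξ hmem
      have hξA : η ≤ t ξ := hmem
      obtain ⟨ht0, ha0, habs, ht1, ha1⟩ := hξ
      have hup : a ξ ≤ (1+η) * t ξ := by
        have := abs_le.mp habs
        nlinarith only [this.2, hξA, hη0.le]
      calc Φu ξ = phi γ (s * a ξ) := rfl
      _ ≤ phi γ ((1+η) * (s * t ξ)) := by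
          apply phi_mono γ hγ (mul_nonneg hs0 ha0)
          have h9 := mul_le_mul_of_nonneg_left hup hs0
          linarith only [h9, (by ring : s * ((1+η) * t ξ) = (1+η) * (s * t ξ))]
      _ ≤ (1+η)^2 * phi γ (s * t ξ) :=
          phi_rescale γ hγ (by linarith only [hη0.le] : (1:ℝ) ≤ 1+η) (mul_nonneg hs0 ht0)
      _ = (1+η)^2 * Φg ξ := rfl
    rwa [integral_const_mul] at h1
  -- conclude
  clear_value Mtot Jtot MA P JA Jc φc K η Λ m'
  constructor
  · -- lower bound
    have e1 : Mtot - K*η*Mtot ≤ MA := by linarith only [hf2, heqM]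
    have e2 : (1-η)^2 * (Mtot - K*η*Mtot) ≤ (1-η)^2 * MA :=
      mul_le_mul_of_nonneg_left e1 (by positivity)
    have e3 : (1 - ε₀) * Mtot ≤ (1-η)^2 * (Mtot - K*η*Mtot) := by
      have h := mul_le_mul_of_nonneg_right hscalarL hMtot0
      have heq : ((1-η)^2 * (1-K*η)) * Mtot = (1-η)^2 * (Mtot - K*η*Mtot) := by ring
      linarith only [h, heq.le, heq.ge]
    linarith only [e2, e3, hf4, hJc0, heqJ]
  · -- upper bound
    have e1 : MA ≤ Mtot := by linarith only [hP0, heqM]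
    have e2 : JA ≤ (1+η)^2 * Mtot :=
      le_trans hf5 (mul_le_mul_of_nonneg_left e1 (by positivity))
    have e3 : ((1+η)^2 + 2*K*η) * Mtot ≤ (1 + ε₀) * Mtot :=
      mul_le_mul_of_nonneg_right hscalarU hMtot0
    have e4 : ((1+η)^2 + 2*K*η) * Mtot = (1+η)^2 * Mtot + 2*K*η*Mtot := by ring
    linarith only [hf3, e2, e3, e4.le, e4.ge, heqJ]
end

section
/- Let d ≥ 1. For each i = 1, …, d let q_i ≥ 0 and let ν_i be a Borel measure on (0, +∞) with ∫₀^∞ (v² ∧ v) ν_i(dv) < +∞, and define J_i(b) = (1/2)·q_i·b² + ∫₀^∞ (e^{−bv} − 1 + bv) ν_i(dv) for b ≥ 0. Assume each J_i is not identically zero and varies regularly at 0, i.e., there is α_i ∈ ℝ such that lim_{x→0+} J_i(b·x)/J_i(x) = b^{α_i} for every b > 0. Let G = (G_1, …, G_d) : [0, +∞) → [0, +∞)^d be continuous with G(0) = 0, and suppose there exist c ≥ 0 and a Borel measure μ on (0, +∞) with ∫₀^∞ (v ∧ v²) μ(dv) < +∞ such that Σ_{i=1}^d J_i(b·G_i(x))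 = x·( c·b² + J_μ(b) ) for all b, x ≥ 0, where J_μ(b) = ∫₀^∞ (e^{−bv} − 1 + bv) μ(dv), and suppose c·b² + J_μ(b) is not identically zero. Then there exist an integer g with 1 ≤ g ≤ d, constants η_1, …, η_g > 0, and pairwise distinct exponents α'_1, …, α'_g ∈ (1, 2], each equal to one of the indices α_1, …, α_d, such that c·b² + J_μ(b) = Σ_{k=1}^g η_k·b^{α'_k} for all b ≥ 0. -/
open Real Filter Set MeasureTheory

lemma aux_nonneg (u : ℝ) : 0 ≤ Real.exp (-u) - 1 + u := by
  have := Real.add_one_le_exp (-u); linarith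

lemma aux_le_lin {u : ℝ} (hu : 0 ≤ u) : Real.exp (-u) - 1 + u ≤ u := by
  have : Real.exp (-u) ≤ 1 := Real.exp_le_one_iff.mpr (by linarith)
  linarith

lemma aux_le_sq {u : ℝ} (hu : 0 ≤ u) : Real.exp (-u) - 1 + u ≤ u ^ 2 / 2 := by
  have key : ∀ t ∈ Set.Ici (0:ℝ), Real.exp (-t) - 1 + t - t ^ 2 / 2 ≤ 0 := by
    intro t ht
    have hmono : AntitoneOn (fun t => Real.exp (-t) - 1 + t - t ^ 2 / 2) (Set.Ici 0) := by
      apply antitoneOn_of_deriv_nonpos (convex_Ici 0)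
      · fun_prop
      · fun_prop
      · intro x hx
        simp only [interior_Ici, Set.mem_Ioi] at hx
        have hd : HasDerivAt (fun t => Real.exp (-t) - 1 + t - t ^ 2 / 2)
            (Real.exp (-x) * (-1) + 1 - (↑2 * x ^ (2-1)) / 2) x := by
          have h := ((((Real.hasDerivAt_exp (-x)).comp x (hasDerivAt_neg x)).sub_const 1).add
            (hasDerivAt_id x)).sub ((hasDerivAt_pow 2 x).div_const 2)
          simpa [Function.comp, Pi.add_def, Pi.sub_def] using h
        rw [hd.deriv]
        have := Real.add_one_le_exp (-x)
        push_cast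
        nlinarith
    have := hmono (Set.self_mem_Ici) ht ht
    simp only [neg_zero, Real.exp_zero] at this
    linarith
  have := key u hu
  linarith

lemma aux_fpos {b v : ℝ} (hb : 0 < b) (hv : 0 < v) : 0 < Real.exp (-(b*v)) - 1 + b*v := by
  have := Real.add_one_lt_exp (x := -(b*v)) (by nlinarith)
  linarith

lemma aux_bound {b v : ℝ} (hb : 0 ≤ b) (hv : 0 < v) :
    Real.exp (-(b*v)) - 1 + b*v ≤ max b (b^2/2) * min v (v^2) := by
  rcases le_total v 1 with h1 | h1
  · have hmin : min v (v^2) = v^2 := by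
      rw [min_eq_right]; nlinarith
    rw [hmin]
    calc Real.exp (-(b*v)) - 1 + b*v ≤ (b*v)^2/2 := aux_le_sq (by positivity)
      _ = b^2/2 * v^2 := by ring
      _ ≤ max b (b^2/2) * v^2 := by nlinarith [le_max_right b (b^2/2), sq_nonneg v]
  · have hmin : min v (v^2) = v := by
      rw [min_eq_left]; nlinarith
    rw [hmin]
    calc Real.exp (-(b*v)) - 1 + b*v ≤ b*v := aux_le_lin (by positivity)
      _ ≤ max b (b^2/2) * v := by nlinarith [le_max_left b (b^2/2)]

lemma aux_bound2 {b v : ℝ} (hb : 1 ≤ b) (hv : 0 < v) :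
    Real.exp (-(b*v)) - 1 + b*v ≤ b^2 * min v (v^2) := by
  have hb0 : (0:ℝ) ≤ b := by linarith
  rcases le_total v 1 with h1 | h1
  · have hmin : min v (v^2) = v^2 := by
      rw [min_eq_right]; nlinarith
    rw [hmin]
    calc Real.exp (-(b*v)) - 1 + b*v ≤ (b*v)^2/2 := aux_le_sq (by positivity)
      _ ≤ b^2 * v^2 := by nlinarith [sq_nonneg (b*v)]
  · have hmin : min v (v^2) = v := by
      rw [min_eq_left]; nlinarith
    rw [hmin]
    calc Real.exp (-(b*v)) - 1 + b*v ≤ b*v := aux_le_lin (by positivity)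
      _ ≤ b^2 * v := by nlinarith [mul_le_mul_of_nonneg_right (show b ≤ b^2 by nlinarith) hv.le]

lemma aux_integrable (ρ : Measure ℝ)
    (hρ : ∫⁻ v in Set.Ioi (0:ℝ), ENNReal.ofReal (min v (v^2)) ∂ρ < ⊤)
    {b : ℝ} (hb : 0 ≤ b) :
    IntegrableOn (fun v => Real.exp (-(b*v)) - 1 + b*v) (Set.Ioi 0) ρ := by
  constructor
  · exact (Continuous.aestronglyMeasurable (by fun_prop))
  · rw [hasFiniteIntegral_iff_norm]
    calc ∫⁻ v in Set.Ioi (0:ℝ), ENNReal.ofReal ‖Real.exp (-(b*v)) - 1 + b*v‖ ∂ρ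
        ≤ ∫⁻ v in Set.Ioi (0:ℝ), ENNReal.ofReal (max b (b^2/2)) * ENNReal.ofReal (min v (v^2)) ∂ρ := by
          apply lintegral_mono_ae
          filter_upwards [ae_restrict_mem measurableSet_Ioi] with v hv
          rw [← ENNReal.ofReal_mul (by positivity)]
          apply ENNReal.ofReal_le_ofReal
          rw [Real.norm_eq_abs, abs_of_nonneg (aux_nonneg _)]
          exact aux_bound hb hv
      _ = ENNReal.ofReal (max b (b^2/2)) * ∫⁻ v in Set.Ioi (0:ℝ), ENNReal.ofReal (min v (v^2)) ∂ρ := by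
          rw [lintegral_const_mul' _ _ ENNReal.ofReal_ne_top]
      _ < ⊤ := ENNReal.mul_lt_top ENNReal.ofReal_lt_top hρ

lemma aux_min_integrable (ρ : Measure ℝ)
    (hρ : ∫⁻ v in Set.Ioi (0:ℝ), ENNReal.ofReal (min v (v^2)) ∂ρ < ⊤) :
    IntegrableOn (fun v => min v (v^2)) (Set.Ioi 0) ρ := by
  constructor
  · exact (Continuous.aestronglyMeasurable (by fun_prop))
  · rw [hasFiniteIntegral_iff_norm]
    refine lt_of_le_of_lt (le_of_eq ?_) hρ
    apply lintegral_congr_ae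
    filter_upwards [ae_restrict_mem measurableSet_Ioi] with v hv
    congr 1
    rw [Real.norm_eq_abs, abs_of_nonneg]
    have : (0:ℝ) < v := hv
    positivity

lemma aux_support {b : ℝ} (hb : 0 < b) :
    (Function.support (fun v => Real.exp (-(b*v)) - 1 + b*v)) ∩ Set.Ioi 0 = Set.Ioi 0 := by
  apply Set.inter_eq_right.mpr
  intro v hv
  exact ne_of_gt (aux_fpos hb hv)

lemma aux_pos_transfer (ρ : Measure ℝ)
    (hρ : ∫⁻ v in Set.Ioi (0:ℝ), ENNReal.ofReal (min v (v^2)) ∂ρ < ⊤)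
    {b0 y : ℝ} (hb0 : 0 < b0) (hy : 0 < y)
    (h : 0 < ∫ v in Set.Ioi (0:ℝ), (Real.exp (-(b0*v)) - 1 + b0*v) ∂ρ) :
    0 < ∫ v in Set.Ioi (0:ℝ), (Real.exp (-(y*v)) - 1 + y*v) ∂ρ := by
  have hnn : ∀ b : ℝ, (0:ℝ → ℝ) ≤ᵐ[ρ.restrict (Set.Ioi 0)] (fun v => Real.exp (-(b*v)) - 1 + b*v) :=
    fun b => Eventually.of_forall (fun v => aux_nonneg _)
  rw [setIntegral_pos_iff_support_of_nonneg_ae (hnn b0) (aux_integrable ρ hρ hb0.le),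
    aux_support hb0] at h
  rw [setIntegral_pos_iff_support_of_nonneg_ae (hnn y) (aux_integrable ρ hρ hy.le),
    aux_support hy]
  exact h

lemma aux_div_tendsto (ρ : Measure ℝ)
    (hρ : ∫⁻ v in Set.Ioi (0:ℝ), ENNReal.ofReal (min v (v^2)) ∂ρ < ⊤) :
    Tendsto (fun b => ∫ v in Set.Ioi (0:ℝ), (Real.exp (-(b*v)) - 1 + b*v)/b ∂ρ)
      (nhdsWithin 0 (Set.Ioi 0)) (nhds 0) := by
  have key : Tendsto (fun b => ∫ v in Set.Ioi (0:ℝ), (Real.exp (-(b*v)) - 1 + b*v)/b ∂ρ)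
      (nhdsWithin 0 (Set.Ioi 0)) (nhds (∫ v in Set.Ioi (0:ℝ), (0:ℝ) ∂ρ)) := by
    apply tendsto_integral_filter_of_dominated_convergence (fun v => min v (v^2))
    · filter_upwards with b
      exact (Continuous.aestronglyMeasurable (by fun_prop))
    · filter_upwards [self_mem_nhdsWithin, Ioo_mem_nhdsGT one_pos] with b hb hb1
      filter_upwards [ae_restrict_mem measurableSet_Ioi] with v hv
      have hb' : (0:ℝ) < b := hb
      have hv' : (0:ℝ) < v := hv
      have hnum := aux_nonneg (b*v)
      rw [Real.norm_eq_abs, abs_of_nonneg (by positivity)]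
      apply le_min
      · rw [div_le_iff₀ hb']
        calc Real.exp (-(b*v)) - 1 + b*v ≤ b*v := aux_le_lin (by positivity)
          _ = v * b := by ring
      · rw [div_le_iff₀ hb']
        calc Real.exp (-(b*v)) - 1 + b*v ≤ (b*v)^2/2 := aux_le_sq (by positivity)
          _ ≤ v^2 * b := by nlinarith [hb1.2, sq_nonneg v]
    · exact aux_min_integrable ρ hρ
    · filter_upwards [ae_restrict_mem measurableSet_Ioi] with v hv
      have hv' : (0:ℝ) < v := hv
      apply tendsto_of_tendsto_of_tendsto_of_le_of_le' (g := fun _ => (0:ℝ))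
        (h := fun b => b * v^2 / 2) tendsto_const_nhds
      · have : Tendsto (fun b : ℝ => b * v^2/2) (nhdsWithin 0 (Set.Ioi 0)) (nhds (0 * v^2/2)) :=
          (tendsto_id.mul tendsto_const_nhds).div_const 2 |>.mono_left nhdsWithin_le_nhds
        simpa using this
      · filter_upwards [self_mem_nhdsWithin] with b hb
        have hb' : (0:ℝ) < b := hb
        exact div_nonneg (aux_nonneg _) hb'.le
      · filter_upwards [self_mem_nhdsWithin] with b hb
        have hb' : (0:ℝ) < b := hb
        rw [div_le_iff₀ hb']
        calc Real.exp (-(b*v)) - 1 + b*v ≤ (b*v)^2/2 := aux_le_sq (by positivity)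
          _ = b * v^2/2 * b := by ring
  simpa using key

/-- Theorem (noise with independent coordinates): if each Laplace exponent
`J_i(b) = (1/2)q_i b² + ∫ (e^{−bv} − 1 + bv) ν_i(dv)` is nonzero and varies regularly
at `0` with index `α_i`, `G` is continuous, nonnegative, `G(0) = 0`, and
`Σ_i J_i(b·G_i(x)) = x·(c·b² + J_μ(b))` for all `b, x ≥ 0` with the right side not
identically zero, then `c·b² + J_μ(b) = Σ_{k=1}^g η_k b^{α'_k}` with `1 ≤ g ≤ d`,
`η_k > 0` and pairwise distinct `α'_k ∈ (1,2]`, each among the indices `α_i`. -/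
theorem stmt8 (d : ℕ) (hd : 1 ≤ d)
    (q : Fin d → ℝ) (hq : ∀ i, 0 ≤ q i)
    (ν : Fin d → Measure ℝ)
    (hν : ∀ i, ∫⁻ v in Set.Ioi (0:ℝ), ENNReal.ofReal (min (v ^ 2) v) ∂(ν i) < ⊤)
    (J : Fin d → ℝ → ℝ)
    (hJ : ∀ i, ∀ b ≥ (0:ℝ), J i b =
      (1/2) * q i * b ^ 2
        + ∫ v in Set.Ioi (0:ℝ), (Real.exp (-(b * v)) - 1 + b * v) ∂(ν i))
    (hJne : ∀ i, ∃ b ≥ (0:ℝ), J i b ≠ 0)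
    (α : Fin d → ℝ)
    (hreg : ∀ i, ∀ b > (0:ℝ),
      Tendsto (fun x => J i (b * x) / J i x) (nhdsWithin 0 (Set.Ioi 0))
        (nhds (b ^ α i)))
    (G : Fin d → ℝ → ℝ)
    (hGcont : ∀ i, ContinuousOn (G i) (Set.Ici 0))
    (hGnn : ∀ i, ∀ x ≥ (0:ℝ), 0 ≤ G i x)
    (hG0 : ∀ i, G i 0 = 0)
    (c : ℝ) (hc : 0 ≤ c)
    (μ : Measure ℝ)
    (hμ : ∫⁻ v in Set.Ioi (0:ℝ), ENNReal.ofReal (min v (v ^ 2)) ∂μ < ⊤)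
    (Jμ : ℝ → ℝ)
    (hJμ : ∀ b ≥ (0:ℝ), Jμ b = ∫ v in Set.Ioi (0:ℝ), (Real.exp (-(b * v)) - 1 + b * v) ∂μ)
    (heq : ∀ b ≥ (0:ℝ), ∀ x ≥ (0:ℝ), (∑ i, J i (b * G i x)) = x * (c * b ^ 2 + Jμ b))
    (hne : ∃ b ≥ (0:ℝ), c * b ^ 2 + Jμ b ≠ 0) :
    ∃ g : ℕ, 1 ≤ g ∧ g ≤ d ∧ ∃ η : Fin g → ℝ, ∃ α' : Fin g → ℝ,
      (∀ k, 0 < η k) ∧ (∀ k, α' k ∈ Set.Ioc (1:ℝ) 2) ∧ Function.Injective α' ∧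
      (∀ k, ∃ i, α' k = α i) ∧
      ∀ b ≥ (0:ℝ), c * b ^ 2 + Jμ b = ∑ k, η k * b ^ α' k := by
  -- convert measure hypotheses
  have hν' : ∀ i, ∫⁻ v in Set.Ioi (0:ℝ), ENNReal.ofReal (min v (v ^ 2)) ∂(ν i) < ⊤ := by
    intro i
    refine lt_of_le_of_lt (le_of_eq ?_) (hν i)
    apply lintegral_congr
    intro v
    rw [min_comm]
  -- value at zero
  have hJμ0 : Jμ 0 = 0 := by
    rw [hJμ 0 le_rfl]
    simp
  have hJ0 : ∀ i, J i 0 = 0 := by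
    intro i
    rw [hJ i 0 le_rfl]
    simp
  -- nonnegativity of J
  have hJnn : ∀ i, ∀ y, 0 ≤ y → 0 ≤ J i y := by
    intro i y hy
    rw [hJ i y hy]
    have h1 : 0 ≤ (1/2) * q i * y ^ 2 :=
      mul_nonneg (mul_nonneg (by norm_num) (hq i)) (sq_nonneg y)
    have h2 : 0 ≤ ∫ v in Set.Ioi (0:ℝ), (Real.exp (-(y * v)) - 1 + y * v) ∂(ν i) :=
      setIntegral_nonneg measurableSet_Ioi (fun v _ => aux_nonneg _)
    linarith
  -- positivity of J
  have hJpos : ∀ i, ∀ y, 0 < y → 0 < J i y := by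
    intro i y hy
    obtain ⟨b0, hb0, hb0ne⟩ := hJne i
    have hb0pos : 0 < b0 := by
      rcases lt_or_eq_of_le hb0 with h | h
      · exact h
      · exact absurd (hJ0 i) (by rw [← h] at hb0ne; exact hb0ne)
    have hint0 : 0 ≤ ∫ v in Set.Ioi (0:ℝ), (Real.exp (-(b0 * v)) - 1 + b0 * v) ∂(ν i) :=
      setIntegral_nonneg measurableSet_Ioi (fun v _ => aux_nonneg _)
    have hinty : 0 ≤ ∫ v in Set.Ioi (0:ℝ), (Real.exp (-(y * v)) - 1 + y * v) ∂(ν i) :=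
      setIntegral_nonneg measurableSet_Ioi (fun v _ => aux_nonneg _)
    rcases lt_or_eq_of_le (hq i) with hqpos | hq0
    · rw [hJ i y hy.le]
      have : 0 < (1/2) * q i * y ^ 2 :=
        mul_pos (mul_pos (by norm_num) hqpos) (by positivity)
      linarith
    · have hJb0 : J i b0 = ∫ v in Set.Ioi (0:ℝ), (Real.exp (-(b0 * v)) - 1 + b0 * v) ∂(ν i) := by
        rw [hJ i b0 hb0, ← hq0]
        norm_num
      have hpos0 : 0 < ∫ v in Set.Ioi (0:ℝ), (Real.exp (-(b0 * v)) - 1 + b0 * v) ∂(ν i) := by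
        rcases lt_or_eq_of_le hint0 with h | h
        · exact h
        · exact absurd (by rw [hJb0, ← h]) hb0ne
      have := aux_pos_transfer (ν i) (hν' i) hb0pos hy hpos0
      rw [hJ i y hy.le, ← hq0]
      simpa using this
  -- nonnegativity and positivity of Φ
  have hΦnn : ∀ b, 0 ≤ b → 0 ≤ c * b ^ 2 + Jμ b := by
    intro b hb
    rw [hJμ b hb]
    have h2 : 0 ≤ ∫ v in Set.Ioi (0:ℝ), (Real.exp (-(b * v)) - 1 + b * v) ∂μ :=
      setIntegral_nonneg measurableSet_Ioi (fun v _ => aux_nonneg _)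
    positivity
  have hΦpos : ∀ b, 0 < b → 0 < c * b ^ 2 + Jμ b := by
    intro b hb
    obtain ⟨b0, hb0, hb0ne⟩ := hne
    have hb0pos : 0 < b0 := by
      rcases lt_or_eq_of_le hb0 with h | h
      · exact h
      · exfalso; apply hb0ne; rw [← h, hJμ0]; ring
    have hint0 : 0 ≤ ∫ v in Set.Ioi (0:ℝ), (Real.exp (-(b0 * v)) - 1 + b0 * v) ∂μ :=
      setIntegral_nonneg measurableSet_Ioi (fun v _ => aux_nonneg _)
    have hintb : 0 ≤ ∫ v in Set.Ioi (0:ℝ), (Real.exp (-(b * v)) - 1 + b * v) ∂μ :=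
      setIntegral_nonneg measurableSet_Ioi (fun v _ => aux_nonneg _)
    rcases lt_or_eq_of_le hc with hcpos | hc0
    · rw [hJμ b hb.le]
      have : 0 < c * b ^ 2 := by positivity
      linarith
    · have hpos0 : 0 < ∫ v in Set.Ioi (0:ℝ), (Real.exp (-(b0 * v)) - 1 + b0 * v) ∂μ := by
        rcases lt_or_eq_of_le hint0 with h | h
        · exact h
        · exfalso; apply hb0ne
          rw [hJμ b0 hb0, ← h, ← hc0]; ring
      have := aux_pos_transfer μ hμ hb0pos hb hpos0
      rw [hJμ b hb.le, ← hc0]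
      linarith
  set Φ1 : ℝ := c * 1 ^ 2 + Jμ 1 with hΦ1def
  have hΦ1pos : 0 < Φ1 := hΦpos 1 one_pos
  -- the weights
  set w : Fin d → ℝ → ℝ := fun i x => J i (G i x) / (x * Φ1) with hwdef
  have hsum1 : ∀ x, 0 < x → ∑ i, J i (G i x) = x * Φ1 := by
    intro x hx
    have h := heq 1 zero_le_one x hx.le
    simp only [one_mul] at h
    rw [h, hΦ1def]
  have hwnn : ∀ i, ∀ x, 0 < x → 0 ≤ w i x :=
    fun i x hx => div_nonneg (hJnn i _ (hGnn i x hx.le)) (by positivity)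
  have hwle : ∀ i, ∀ x, 0 < x → w i x ≤ 1 := by
    intro i x hx
    rw [hwdef]
    simp only
    rw [div_le_one (by positivity)]
    rw [← hsum1 x hx]
    exact Finset.single_le_sum (f := fun j => J j (G j x))
      (fun j _ => hJnn j _ (hGnn j x hx.le)) (Finset.mem_univ i)
  have hwsum : ∀ x, 0 < x → ∑ i, w i x = 1 := by
    intro x hx
    rw [hwdef]
    simp only
    rw [← Finset.sum_div, hsum1 x hx, div_self (by positivity)]
  -- the sequence
  set xs : ℕ → ℝ := fun n => 1 / ((n : ℝ) + 1) with hxsdef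
  have hxspos : ∀ n, 0 < xs n := fun n => by positivity
  have hxs0 : Tendsto xs atTop (nhds 0) := tendsto_one_div_add_atTop_nhds_zero_nat
  -- compactness
  have hK : IsCompact (Set.pi Set.univ (fun _ : Fin d => Set.Icc (0:ℝ) 1)) :=
    isCompact_univ_pi (fun _ => isCompact_Icc)
  have humem : ∀ n, (fun i => w i (xs n)) ∈ Set.pi Set.univ (fun _ : Fin d => Set.Icc (0:ℝ) 1) := by
    intro n i _
    exact ⟨hwnn i _ (hxspos n), hwle i _ (hxspos n)⟩
  obtain ⟨winf, hwinfmem, φ, hφmono, hφtendsto⟩ := hK.tendsto_subseq humem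
  have hwinf : ∀ i, winf i ∈ Set.Icc (0:ℝ) 1 := fun i => hwinfmem i (Set.mem_univ i)
  have hxφ : Tendsto (fun n => xs (φ n)) atTop (nhdsWithin 0 (Set.Ioi 0)) := by
    rw [tendsto_nhdsWithin_iff]
    exact ⟨hxs0.comp hφmono.tendsto_atTop, Eventually.of_forall (fun n => hxspos _)⟩
  have hwconv : ∀ i, Tendsto (fun n => w i (xs (φ n))) atTop (nhds (winf i)) := by
    intro i
    have := tendsto_pi_nhds.mp hφtendsto i
    exact this
  have hwinfsum : ∑ i, winf i = 1 := by
    have h1 : Tendsto (fun n => ∑ i, w i (xs (φ n))) atTop (nhds (∑ i, winf i)) :=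
      tendsto_finset_sum _ (fun i _ => hwconv i)
    have h2 : (fun n => ∑ i, w i (xs (φ n))) = fun _ => (1:ℝ) := by
      funext n
      exact hwsum _ (hxspos _)
    rw [h2] at h1
    exact (tendsto_nhds_unique tendsto_const_nhds h1).symm
  -- the key representation
  have key : ∀ b, 0 < b → c * b ^ 2 + Jμ b = Φ1 * ∑ i, winf i * b ^ α i := by
    intro b hb
    -- the ratio helper
    have hterm : ∀ i, Tendsto (fun n => J i (b * G i (xs (φ n))) / (xs (φ n) * Φ1)) atTop
        (nhds (winf i * b ^ α i)) := by
      intro i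
      set h : ℝ → ℝ := fun y => if 0 < y then J i (b * y) / J i y else b ^ α i with hhdef
      have hh : Tendsto h (nhdsWithin 0 (Set.Ici 0)) (nhds (b ^ α i)) := by
        have hIci : (Set.Ici (0:ℝ)) = insert 0 (Set.Ioi 0) := by
          rw [Set.Ioi_insert]
        rw [hIci, nhdsWithin_insert, tendsto_sup]
        constructor
        · have h0 : h 0 = b ^ α i := by simp [hhdef]
          rw [← h0]
          exact tendsto_pure_nhds h 0
        · apply Tendsto.congr' _ (hreg i b hb)
          filter_upwards [self_mem_nhdsWithin] with y hy
          rw [hhdef]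
          simp only [if_pos (show (0:ℝ) < y from hy)]
      have hGt : Tendsto (fun n => G i (xs (φ n))) atTop (nhdsWithin 0 (Set.Ici 0)) := by
        rw [tendsto_nhdsWithin_iff]
        constructor
        · have hcw : Tendsto (G i) (nhdsWithin 0 (Set.Ici 0)) (nhds 0) := by
            have := (hGcont i) 0 (Set.self_mem_Ici)
            rw [ContinuousWithinAt, hG0 i] at this
            exact this
          exact hcw.comp (hxφ.mono_right (nhdsWithin_mono 0 Set.Ioi_subset_Ici_self))
        · exact Eventually.of_forall (fun n => hGnn i _ (hxspos _).le)
      have hr : Tendsto (fun n => h (G i (xs (φ n)))) atTop (nhds (b ^ α i)) := hh.comp hGt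
      have heqterm : ∀ n, J i (b * G i (xs (φ n))) / (xs (φ n) * Φ1)
          = w i (xs (φ n)) * h (G i (xs (φ n))) := by
        intro n
        set x := xs (φ n)
        have hx : 0 < x := hxspos _
        rcases lt_or_eq_of_le (hGnn i x hx.le) with hG | hG
        · rw [hhdef]
          simp only [if_pos hG]
          rw [hwdef]
          simp only
          have hJG : J i (G i x) ≠ 0 := ne_of_gt (hJpos i _ hG)
          field_simp
        · rw [hhdef, hwdef]
          simp only [← hG, if_neg (lt_irrefl (0:ℝ)), mul_zero, hJ0 i, zero_div, zero_mul]
      have := (hwconv i).mul hr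
      apply Tendsto.congr' _ this
      filter_upwards with n
      exact (heqterm n).symm
    have hsumt : Tendsto (fun n => ∑ i, J i (b * G i (xs (φ n))) / (xs (φ n) * Φ1)) atTop
        (nhds (∑ i, winf i * b ^ α i)) := tendsto_finset_sum _ (fun i _ => hterm i)
    have hconst : ∀ n, ∑ i, J i (b * G i (xs (φ n))) / (xs (φ n) * Φ1)
        = (c * b ^ 2 + Jμ b) / Φ1 := by
      intro n
      set x := xs (φ n)
      have hx : 0 < x := hxspos _
      rw [← Finset.sum_div, heq b hb.le x hx.le,
        mul_div_mul_left _ _ (ne_of_gt hx)]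
    rw [funext hconst] at hsumt
    have h2 := tendsto_nhds_unique tendsto_const_nhds hsumt
    rw [← h2]
    field_simp
  -- bounds on exponents
  have hwinfnn : ∀ i, 0 ≤ winf i := fun i => (hwinf i).1
  have hlow : ∀ j, ∀ b, 0 < b → Φ1 * (winf j * b ^ α j) ≤ c * b ^ 2 + Jμ b := by
    intro j b hb
    rw [key b hb]
    apply mul_le_mul_of_nonneg_left _ hΦ1pos.le
    exact Finset.single_le_sum (f := fun i => winf i * b ^ α i)
      (fun i _ => mul_nonneg (hwinfnn i) (Real.rpow_nonneg hb.le _)) (Finset.mem_univ j)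
  have hexp : ∀ j, 0 < winf j → 1 < α j ∧ α j ≤ 2 := by
    intro j hj
    have hδ : 0 < Φ1 * winf j := mul_pos hΦ1pos hj
    constructor
    · by_contra hcon
      push_neg at hcon
      -- Φ(b)/b → 0 as b → 0⁺
      have hlim : Tendsto (fun b => (c * b ^ 2 + Jμ b) / b) (nhdsWithin 0 (Set.Ioi 0)) (nhds 0) := by
        have h1 : Tendsto (fun b : ℝ => c * b + ∫ v in Set.Ioi (0:ℝ),
            (Real.exp (-(b*v)) - 1 + b*v)/b ∂μ) (nhdsWithin 0 (Set.Ioi 0)) (nhds 0) := by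
          have hc0 : Tendsto (fun b : ℝ => c * b) (nhdsWithin 0 (Set.Ioi 0)) (nhds 0) := by
            have : Tendsto (fun b : ℝ => c * b) (nhds 0) (nhds (c * 0)) :=
              (continuous_const.mul continuous_id).tendsto 0
            simp only [mul_zero] at this
            exact this.mono_left nhdsWithin_le_nhds
          have := hc0.add (aux_div_tendsto μ hμ)
          simpa using this
        apply Tendsto.congr' _ h1
        filter_upwards [self_mem_nhdsWithin] with b hb
        have hb' : (0:ℝ) < b := hb
        rw [hJμ b hb'.le, integral_div, add_div]
        congr 1
        field_simp
      have hev1 : ∀ᶠ b in nhdsWithin (0:ℝ) (Set.Ioi 0),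
          (c * b ^ 2 + Jμ b) / b < Φ1 * winf j := hlim.eventually_lt_const hδ
      have hev2 : Set.Ioo (0:ℝ) 1 ∈ nhdsWithin (0:ℝ) (Set.Ioi 0) := Ioo_mem_nhdsGT one_pos
      obtain ⟨b, hb1, hb2⟩ := (hev1.and hev2).exists
      have hbpos : 0 < b := hb2.1
      have hble : b ≤ 1 := hb2.2.le
      have h3 : b ^ (1:ℝ) ≤ b ^ α j :=
        Real.rpow_le_rpow_of_exponent_ge hbpos hble hcon
      rw [Real.rpow_one] at h3
      have h4 : Φ1 * winf j * b ≤ c * b ^ 2 + Jμ b := by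
        calc Φ1 * winf j * b ≤ Φ1 * (winf j * b ^ α j) := by nlinarith
          _ ≤ c * b ^ 2 + Jμ b := hlow j b hbpos
      rw [div_lt_iff₀ hbpos] at hb1
      linarith
    · by_contra hcon
      push_neg at hcon
      set M := ∫ v in Set.Ioi (0:ℝ), min v (v^2) ∂μ with hMdef
      have hMnn : 0 ≤ M := setIntegral_nonneg measurableSet_Ioi (fun v hv => by
        have : (0:ℝ) < v := hv
        positivity)
      have hub : ∀ b, 1 ≤ b → c * b ^ 2 + Jμ b ≤ (c + M) * b ^ 2 := by
        intro b hb
        have hb0 : (0:ℝ) ≤ b := by linarith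
        have hint : Jμ b ≤ b ^ 2 * M := by
          rw [hJμ b hb0, hMdef, ← integral_const_mul]
          apply setIntegral_mono_on (aux_integrable μ hμ hb0)
            ((aux_min_integrable μ hμ).const_mul _) measurableSet_Ioi
          intro v hv
          exact aux_bound2 hb hv
        nlinarith
      set K := (c + M) / (Φ1 * winf j) with hKdef
      have hKb : ∀ b, 1 ≤ b → b ^ (α j - 2) ≤ K := by
        intro b hb
        have hbpos : (0:ℝ) < b := by linarith
        have h1 := le_trans (hlow j b hbpos) (hub b hb)
        rw [Real.rpow_sub hbpos, Real.rpow_two, hKdef, div_le_div_iff₀ (by positivity) hδ]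
        calc b ^ α j * (Φ1 * winf j) = Φ1 * (winf j * b ^ α j) := by ring
          _ ≤ (c + M) * b ^ 2 := h1
      have hK1 : 1 ≤ K := by
        have := hKb 1 le_rfl
        rwa [Real.one_rpow] at this
      set b0 := (K + 1) ^ (α j - 2)⁻¹ with hb0def
      have hb01 : 1 ≤ b0 := by
        rw [hb0def]
        calc (1:ℝ) = 1 ^ (α j - 2)⁻¹ := (Real.one_rpow _).symm
          _ ≤ (K + 1) ^ (α j - 2)⁻¹ :=
            Real.rpow_le_rpow zero_le_one (by linarith) (inv_nonneg.mpr (by linarith))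
      have hb0v : b0 ^ (α j - 2) = K + 1 := by
        rw [hb0def, Real.rpow_inv_rpow (by linarith) (by linarith)]
      have := hKb b0 hb01
      rw [hb0v] at this
      linarith
  -- assemble the conclusion
  set supp : Finset (Fin d) := Finset.univ.filter (fun i => winf i ≠ 0) with hsuppdef
  have hsupp_pos : ∀ i ∈ supp, 0 < winf i := by
    intro i hi
    rw [hsuppdef, Finset.mem_filter] at hi
    exact lt_of_le_of_ne (hwinfnn i) (Ne.symm hi.2)
  have hsupp_ne : supp.Nonempty := by
    obtain ⟨i, _, hi⟩ := Finset.exists_ne_zero_of_sum_ne_zero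
      (by rw [hwinfsum]; norm_num : ∑ i : Fin d, winf i ≠ 0)
    exact ⟨i, by rw [hsuppdef, Finset.mem_filter]; exact ⟨Finset.mem_univ i, hi⟩⟩
  set A : Finset ℝ := supp.image α with hAdef
  have hA_ne : A.Nonempty := hsupp_ne.image α
  refine ⟨A.card, Finset.card_pos.mpr hA_ne, ?_, ?_⟩
  · calc A.card ≤ supp.card := Finset.card_image_le
      _ ≤ Fintype.card (Fin d) := Finset.card_le_univ supp
      _ = d := Fintype.card_fin d
  set α' : Fin A.card → ℝ := fun k => ((A.equivFin.symm k : A) : ℝ) with hα'def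
  have hα'mem : ∀ k, α' k ∈ A := fun k => (A.equivFin.symm k).2
  set η : Fin A.card → ℝ :=
    fun k => Φ1 * ∑ i ∈ supp.filter (fun i => α i = α' k), winf i with hηdef
  refine ⟨η, α', ?_, ?_, ?_, ?_, ?_⟩
  · -- positivity of η
    intro k
    obtain ⟨i, hi, hαi⟩ := Finset.mem_image.mp (hα'mem k)
    apply mul_pos hΦ1pos
    apply Finset.sum_pos
    · intro l hl
      rw [Finset.mem_filter] at hl
      exact hsupp_pos l hl.1
    · exact ⟨i, Finset.mem_filter.mpr ⟨hi, hαi⟩⟩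
  · -- exponents in (1, 2]
    intro k
    obtain ⟨i, hi, hαi⟩ := Finset.mem_image.mp (hα'mem k)
    obtain ⟨h1, h2⟩ := hexp i (hsupp_pos i hi)
    rw [← hαi]
    exact ⟨h1, h2⟩
  · -- injectivity
    intro k l hkl
    have : (A.equivFin.symm k : A) = (A.equivFin.symm l : A) := Subtype.ext hkl
    exact A.equivFin.symm.injective this
  · -- each exponent is an index
    intro k
    obtain ⟨i, _, hαi⟩ := Finset.mem_image.mp (hα'mem k)
    exact ⟨i, hαi.symm⟩
  · -- the representation
    intro b hb
    rcases lt_or_eq_of_le hb with hbpos | hb0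
    · rw [key b hbpos]
      have hstep1 : ∀ k, η k * b ^ α' k
          = Φ1 * ∑ i ∈ supp.filter (fun i => α i = α' k), winf i * b ^ α i := by
        intro k
        rw [hηdef]
        simp only
        rw [mul_assoc, Finset.sum_mul]
        congr 1
        apply Finset.sum_congr rfl
        intro i hi
        rw [Finset.mem_filter] at hi
        rw [hi.2]
      have hstep2 : ∑ k, η k * b ^ α' k
          = Φ1 * ∑ k, ∑ i ∈ supp.filter (fun i => α i = α' k), winf i * b ^ α i := by
        rw [Finset.mul_sum]
        exact Finset.sum_congr rfl (fun k _ => hstep1 k)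
      rw [hstep2]
      congr 1
      have hreindex : ∑ k, ∑ i ∈ supp.filter (fun i => α i = α' k), winf i * b ^ α i
          = ∑ a ∈ A, ∑ i ∈ supp.filter (fun i => α i = a), winf i * b ^ α i := by
        rw [← Finset.sum_coe_sort A (fun a => ∑ i ∈ supp.filter (fun i => α i = a), winf i * b ^ α i)]
        apply Fintype.sum_equiv A.equivFin.symm
        intro k
        rfl
      rw [hreindex]
      rw [Finset.sum_fiberwise_of_maps_to (fun i hi => Finset.mem_image_of_mem α hi)]
      apply (Finset.sum_subset (Finset.subset_univ supp) _).symm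
      intro i _ hnotin
      have : winf i = 0 := by
        by_contra hne0
        exact hnotin (by rw [hsuppdef, Finset.mem_filter]; exact ⟨Finset.mem_univ i, hne0⟩)
      rw [this, zero_mul]
    · rw [← hb0, hJμ0]
      rw [eq_comm]
      rw [Finset.sum_eq_zero]
      · ring
      · intro k _
        obtain ⟨i, hi, hαi⟩ := Finset.mem_image.mp (hα'mem k)
        have h1 : (1:ℝ) < α' k := by
          rw [← hαi]; exact (hexp i (hsupp_pos i hi)).1
        rw [Real.zero_rpow (by linarith), mul_zero]
end
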